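/- arXiv:2312.17644 — 5 statements merged into one kernel-verified Lean document; each statement's English description precedes it below -/
import Mathlib

section
/- Let X₁ and X₂ be subshifts over countably infinite alphabets A₁ and A₂. If there exists an isometric conjugacy h : X₁ → X₂ (a bijection satisfying d(h(x),h(y)) = d(x,y) for the product metrics and h∘σ = σ∘h), then the associated OTW-subshifts X₁^OTW and X₂^OTW are conjugate, i.e., there exists a length-preserving homeomorphism H : X₁^OTW → X₂^OTW with H∘σ = σ∘H. -/
namespace SubshiftPaper

variable {A : Type*}

/-- The initial word of length `n` of a sequence. -/
def word (x : ℕ → A) (n : ℕ) : List A := List.ofFn (fun i : Fin n => x i)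

/-- Concatenation of a finite word with an infinite sequence. -/
def cat (α : List A) (x : ℕ → A) : ℕ → A := fun n =>
  if h : n < α.length then α.get ⟨n, h⟩ else x (n - α.length)

/-- The shift map on infinite sequences. -/
def shiftSeq (x : ℕ → A) : ℕ → A := fun n => x (n + 1)

/-- `X` is a subshift: the set of sequences avoiding a set `F` of forbidden nonempty
finite words. -/
def IsSubshift (X : Set (ℕ → A)) : Prop :=
  ∃ F : Set (List A), (∀ w ∈ F, w ≠ []) ∧
    X = {x : ℕ → A | ∀ n k : ℕ, word (fun i => x (n + i)) k ∉ F}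

/-- The language of `X`: all finite initial blocks of elements of `X` (and their
subblocks appear by shifting; for subshifts initial blocks suffice). -/
def language (X : Set (ℕ → A)) : Set (List A) :=
  {α | ∃ x ∈ X, word x α.length = α}

open Classical in
/-- The product metric `d(x,y) = 2^{-min{n : xₙ ≠ yₙ}}`. -/
noncomputable def prodDist (x y : ℕ → A) : ℝ :=
  if h : x = y then 0 else (2 : ℝ)⁻¹ ^ Nat.find (Function.ne_iff.mp h)

/-- The cylinder set `Z_α = {x ∈ X : x starts with α}`. -/
def cylinder (X : Set (ℕ → A)) (α : List A) : Set (ℕ → A) :=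
  {x ∈ X | word x α.length = α}

/-- The set `C(α,β) = {βx : βx ∈ X and αx ∈ X}`. -/
def Cab (X : Set (ℕ → A)) (α β : List A) : Set (ℕ → A) :=
  {y | ∃ x : ℕ → A, y = cat β x ∧ cat β x ∈ X ∧ cat α x ∈ X}

/-- The follower set `F_α = {x ∈ X : αx ∈ X}`. -/
def follower (X : Set (ℕ → A)) (α : List A) : Set (ℕ → A) :=
  {x ∈ X | cat α x ∈ X}

/-- The Boolean algebra `U` of subsets of `X` generated by the sets `C(α,β)`: the smallest
collection of subsets containing all `C(α,β)` and `X` and closed under finite unions, finite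
intersections and complements in `X`. -/
def BA (X : Set (ℕ → A)) : Set (Set (ℕ → A)) :=
  ⋂₀ {C : Set (Set (ℕ → A)) | X ∈ C ∧
    (∀ α ∈ language X, ∀ β ∈ language X, Cab X α β ∈ C) ∧
    (∀ S ∈ C, ∀ T ∈ C, S ∪ T ∈ C) ∧
    (∀ S ∈ C, ∀ T ∈ C, S ∩ T ∈ C) ∧
    (∀ S ∈ C, X \ S ∈ C)}

/-- The periodic sequence `γ^∞ = γγγ⋯`. -/
def per (γ : List A) (h : γ ≠ []) : ℕ → A :=
  fun n => γ.get ⟨n % γ.length, Nat.mod_lt n (List.length_pos_iff.mpr h)⟩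

/-- A point is eventually periodic if it has the form `αγ^∞`. -/
def EventuallyPeriodic (x : ℕ → A) : Prop :=
  ∃ (α γ : List A) (h : γ ≠ []), x = cat α (per γ h)

/-- Condition (L): for every finite `P ⊆ L_X` and every nonempty `γ ∈ L_X` with
`γ^∞ ∈ F_P := ⋂_{α ∈ P} F_α`, the set `F_P` contains an element other than `γ^∞`. -/
def ConditionL (X : Set (ℕ → A)) : Prop :=
  ∀ P : Finset (List A), ↑P ⊆ language X →
    ∀ γ ∈ language X, ∀ h : γ ≠ [],
      per γ h ∈ X ∩ ⋂ α ∈ P, follower X α →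
        ∃ z ∈ X ∩ ⋂ α ∈ P, follower X α, z ≠ per γ h


/-- The finite word `α` viewed as the element `α∞∞∞⋯` of `Σ_A`. -/
def finSeq (α : List A) : ℕ → Option A := fun n =>
  if h : n < α.length then some (α.get ⟨n, h⟩) else none

/-- An infinite sequence viewed as an element of `Σ_A`. -/
def infSeq (x : ℕ → A) : ℕ → Option A := fun n => some (x n)

/-- The OTW-subshift `X^OTW = X^inf ∪ X^fin` associated with a subshift `X`: `X^fin` is the
set of finite words `α` admitting infinitely many letters `a` with `αay ∈ X` for some `y`. -/
def otw (X : Set (ℕ → A)) : Set (ℕ → Option A) :=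
  (infSeq '' X) ∪
    {z | ∃ α : List A, z = finSeq α ∧
      {a : A | ∃ y : ℕ → A, cat (α ++ [a]) y ∈ X}.Infinite}

open Classical in
/-- The length of an element of `Σ_A`. -/
noncomputable def otwLength (z : ℕ → Option A) : ℕ∞ :=
  if h : ∃ n, z n = none then (Nat.find h : ℕ∞) else ⊤

/-- The shift map on `Σ_A` (it deletes the first symbol). -/
def shiftO (z : ℕ → Option A) : ℕ → Option A := fun n => z (n + 1)

/-- The generalized cylinder `Z(α, F)`. -/
def gencyl (α : List A) (F : Finset A) : Set (ℕ → Option A) :=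
  {z | (∀ i : Fin α.length, z i = some (α.get i)) ∧ ∀ a ∈ F, z α.length ≠ some a}

/-- The topology on `X^OTW` generated by the generalized cylinders `Z(α,F)`, `α ∈ L_X`,
`F ⊆ A` finite. -/
def otwTop (X : Set (ℕ → A)) : TopologicalSpace ↥(otw X) :=
  TopologicalSpace.generateFrom
    {S | ∃ α ∈ language X, ∃ F : Finset A, S = Subtype.val ⁻¹' gencyl α F}

/-- `H : X₁^OTW → X₂^OTW` is a conjugacy of OTW-subshifts: a homeomorphism (for the topologies
generated by the generalized cylinders) commuting with the shifts and preserving lengths. -/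
def IsOTWConjugacy {A₁ A₂ : Type*} (X₁ : Set (ℕ → A₁)) (X₂ : Set (ℕ → A₂))
    (H : ↥(otw X₁) ≃ ↥(otw X₂)) : Prop :=
  @Continuous _ _ (otwTop X₁) (otwTop X₂) H ∧
  @Continuous _ _ (otwTop X₂) (otwTop X₁) H.symm ∧
  (∀ z : ↥(otw X₁), otwLength (H z).1 = otwLength z.1) ∧
  (∀ z w : ↥(otw X₁), w.1 = shiftO z.1 → (H w).1 = shiftO (H z).1)


/-! ### Auxiliary lemmas -/

section Aux
variable {A : Type*}

@[simp] lemma length_word (x : ℕ → A) (n : ℕ) : (word x n).length = n := List.length_ofFn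

lemma word_get (x : ℕ → A) {n i : ℕ} (h1 : i < (word x n).length) :
    (word x n).get ⟨i, h1⟩ = x i := by simp [word]

lemma word_eq_iff {x y : ℕ → A} {n : ℕ} : word x n = word y n ↔ ∀ i < n, x i = y i := by
  constructor
  · intro hw i hi
    have := congrArg (fun l => l[i]?) hw
    simpa [word, List.getElem?_ofFn, hi] using this
  · intro hv
    apply List.ext_get (by simp [word])
    intro i h1 h2
    simp only [word, List.get_ofFn]
    exact hv i (by simpa [word] using h1)

lemma word_take (x : ℕ → A) {n k : ℕ} (hk : k ≤ n) : (word x n).take k = word x k := by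
  apply List.ext_get (by simp [word, hk])
  intro i h1 h2
  simp [word, List.getElem_take']

lemma word_succ (x : ℕ → A) (n : ℕ) : word x (n + 1) = word x n ++ [x n] := by
  rw [word, List.ofFn_succ', List.concat_eq_append]
  simp [word]

lemma word_shift (x : ℕ → A) (m : ℕ) : word (shiftSeq x) m = (word x (m + 1)).drop 1 := by
  apply List.ext_get (by simp [word])
  intro i h1 h2
  simp only [word, List.get_ofFn, List.getElem_drop]
  simp [shiftSeq]
  rfl

lemma word_cat_le (β : List A) (y : ℕ → A) {k : ℕ} (hk : k ≤ β.length) :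
    word (cat β y) k = β.take k := by
  apply List.ext_get (by simp [word]; omega)
  intro i h1 h2
  have hi : i < β.length := by simp [word] at h1; omega
  simp [word, cat, hi, List.getElem_take']

lemma word_cat (β : List A) (y : ℕ → A) : word (cat β y) β.length = β := by
  rw [word_cat_le β y le_rfl, List.take_length]

lemma cat_word (x : ℕ → A) (n : ℕ) : cat (word x n) (fun m => x (n + m)) = x := by
  funext i
  simp only [cat, word, List.length_ofFn]
  split_ifs with hi
  · simp
  · congr 1; omega

lemma finSeq_eq_get? (α : List A) (n : ℕ) : finSeq α n = α[n]? := by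
  by_cases hn : n < α.length
  · simp [finSeq, hn, List.getElem?_eq_getElem]
  · rw [List.getElem?_eq_none (by omega)]; simp [finSeq, hn]

lemma finSeq_lt (α : List A) {n : ℕ} (hn : n < α.length) :
    finSeq α n = some (α.get ⟨n, hn⟩) := dif_pos hn

lemma finSeq_ge (α : List A) {n : ℕ} (hn : α.length ≤ n) : finSeq α n = none :=
  dif_neg (by omega)

lemma finSeq_injective : Function.Injective (finSeq (A := A)) := fun α β hab =>
  List.ext_getElem? fun n => by rw [← finSeq_eq_get?, ← finSeq_eq_get?, hab]

lemma infSeq_injective : Function.Injective (infSeq (A := A)) := fun x y hxy =>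
  funext fun n => by
    have := congrFun hxy n
    simpa [infSeq] using this

lemma infSeq_ne_finSeq (x : ℕ → A) (γ : List A) : infSeq x ≠ finSeq γ := fun he => by
  have := congrFun he γ.length
  rw [finSeq_ge γ le_rfl] at this
  simp [infSeq] at this

lemma shiftO_finSeq (γ : List A) : shiftO (finSeq γ) = finSeq (γ.drop 1) := by
  funext n
  rw [shiftO, finSeq_eq_get?, finSeq_eq_get?, List.getElem?_drop]
  congr 1
  omega

lemma shiftO_infSeq (x : ℕ → A) : shiftO (infSeq x) = infSeq (shiftSeq x) := rfl

lemma otwLength_infSeq (x : ℕ → A) : otwLength (infSeq x) = ⊤ := by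
  rw [otwLength, dif_neg]
  simp [infSeq]

lemma otwLength_finSeq (γ : List A) : otwLength (finSeq γ) = (γ.length : ℕ∞) := by
  classical
  have hex : ∃ n, finSeq γ n = none := ⟨γ.length, finSeq_ge γ le_rfl⟩
  rw [otwLength, dif_pos hex]
  norm_cast
  rw [Nat.find_eq_iff]
  refine ⟨finSeq_ge γ le_rfl, fun m hm => ?_⟩
  rw [finSeq_lt γ hm]
  simp

lemma word_eq_iff_dist {x y : ℕ → A} (n : ℕ) :
    word x n = word y n ↔ prodDist x y ≤ (2 : ℝ)⁻¹ ^ n := by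
  classical
  rw [prodDist]
  split_ifs with hxy
  · subst hxy
    have : (0:ℝ) ≤ 2⁻¹ ^ n := by positivity
    simp [this]
  · rw [word_eq_iff]
    rw [inv_pow, inv_pow, inv_le_inv₀ (by positivity) (by positivity),
      pow_le_pow_iff_right₀ one_lt_two]
    rw [Nat.le_find_iff]
    simp only [ne_eq, not_not]

lemma shift_mem {X : Set (ℕ → A)} (hX : IsSubshift X) {x : ℕ → A} (hx : x ∈ X) :
    shiftSeq x ∈ X := by
  obtain ⟨F, -, rfl⟩ := hX
  intro n k
  have hnk := hx (n + 1) k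
  have harg : (fun i => shiftSeq x (n + i)) = fun i => x (n + 1 + i) := by
    funext i
    simp only [shiftSeq]
    congr 1
    omega
  rw [harg]
  exact hnk

lemma word_mem_language {X : Set (ℕ → A)} {x : ℕ → A} (hx : x ∈ X) (n : ℕ) :
    word x n ∈ language X := ⟨x, hx, by rw [length_word]⟩

lemma take_mem_language {X : Set (ℕ → A)} {α : List A} (hα : α ∈ language X) (k : ℕ) :
    α.take k ∈ language X := by
  obtain ⟨x, hx, hw⟩ := hα
  rcases le_or_gt k α.length with hk | hk
  · refine ⟨x, hx, ?_⟩
    rw [List.length_take, min_eq_left hk, ← hw, word_take x hk]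
  · rw [List.take_of_length_le (le_of_lt hk)]
    exact ⟨x, hx, hw⟩

end Aux


section Phi
variable {A₁ A₂ : Type*} (X₁ : Set (ℕ → A₁)) (X₂ : Set (ℕ → A₂)) (h : ↥X₁ ≃ ↥X₂)

open Classical in
/-- The induced map on finite words. -/
noncomputable def phi (α : List A₁) : List A₂ :=
  if hα : α ∈ language X₁ then word (h ⟨hα.choose, hα.choose_spec.1⟩).1 α.length else []

variable {X₁ X₂}

lemma word_h_iff (hiso : ∀ x y : ↥X₁, prodDist (h x).1 (h y).1 = prodDist x.1 y.1)
    (x y : ↥X₁) (n : ℕ) :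
    word (h x).1 n = word (h y).1 n ↔ word x.1 n = word y.1 n := by
  rw [word_eq_iff_dist, word_eq_iff_dist, hiso]

lemma phi_word (hiso : ∀ x y : ↥X₁, prodDist (h x).1 (h y).1 = prodDist x.1 y.1)
    {x : ℕ → A₁} (hx : x ∈ X₁) (n : ℕ) :
    phi X₁ X₂ h (word x n) = word (h ⟨x, hx⟩).1 n := by
  have hmem : word x n ∈ language X₁ := word_mem_language hx n
  rw [phi, dif_pos hmem]
  simp only [length_word]
  have hspec := hmem.choose_spec
  simp only [length_word] at hspec
  exact (word_h_iff h hiso _ ⟨x, hx⟩ n).2 hspec.2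

lemma phi_length {α : List A₁} (hα : α ∈ language X₁) :
    (phi X₁ X₂ h α).length = α.length := by
  rw [phi, dif_pos hα, length_word]

lemma phi_nil : phi X₁ X₂ h [] = [] := by
  rw [phi]
  split_ifs <;> simp [word]

lemma phi_mem (hiso : ∀ x y : ↥X₁, prodDist (h x).1 (h y).1 = prodDist x.1 y.1)
    {α : List A₁} (hα : α ∈ language X₁) : phi X₁ X₂ h α ∈ language X₂ := by
  obtain ⟨x, hx, hw⟩ := hα
  rw [← hw, phi_word h hiso hx]
  exact word_mem_language (h _).2 _

lemma hiso_symm (hiso : ∀ x y : ↥X₁, prodDist (h x).1 (h y).1 = prodDist x.1 y.1) :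
    ∀ u v : ↥X₂, prodDist (h.symm u).1 (h.symm v).1 = prodDist u.1 v.1 := by
  intro u v
  rw [← hiso (h.symm u) (h.symm v)]
  simp

lemma psi_phi (hiso : ∀ x y : ↥X₁, prodDist (h x).1 (h y).1 = prodDist x.1 y.1)
    {α : List A₁} (hα : α ∈ language X₁) :
    phi X₂ X₁ h.symm (phi X₁ X₂ h α) = α := by
  obtain ⟨x, hx, hw⟩ := hα
  rw [← hw, phi_word h hiso hx, phi_word h.symm (hiso_symm h hiso) (h ⟨x, hx⟩).2]
  have he : (⟨(h ⟨x, hx⟩).1, (h ⟨x, hx⟩).2⟩ : ↥X₂) = h ⟨x, hx⟩ := rfl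
  rw [he, Equiv.symm_apply_apply]

lemma phi_take (hiso : ∀ x y : ↥X₁, prodDist (h x).1 (h y).1 = prodDist x.1 y.1)
    {α : List A₁} (hα : α ∈ language X₁) (k : ℕ) :
    phi X₁ X₂ h (α.take k) = (phi X₁ X₂ h α).take k := by
  rcases le_or_gt k α.length with hk | hk
  · obtain ⟨x, hx, hw⟩ := hα
    have h1 : α.take k = word x k := by rw [← hw, word_take x hk]
    rw [h1, ← hw, phi_word h hiso hx, phi_word h hiso hx, word_take _ hk]
  · rw [List.take_of_length_le (le_of_lt hk),
      List.take_of_length_le (by rw [phi_length h hα]; omega)]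

lemma phi_drop (hX₁ : IsSubshift X₁)
    (hiso : ∀ x y : ↥X₁, prodDist (h x).1 (h y).1 = prodDist x.1 y.1)
    (hshift : ∀ x y : ↥X₁, y.1 = shiftSeq x.1 → (h y).1 = shiftSeq (h x).1)
    {α : List A₁} (hα : α ∈ language X₁) :
    phi X₁ X₂ h (α.drop 1) = (phi X₁ X₂ h α).drop 1 := by
  obtain ⟨x, hx, hw⟩ := hα
  rcases Nat.eq_zero_or_pos α.length with h0 | hpos
  · have hnil : α = [] := List.eq_nil_of_length_eq_zero h0
    subst hnil
    simp [phi_nil]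
  · obtain ⟨m, hm⟩ : ∃ m, α.length = m + 1 := ⟨α.length - 1, by omega⟩
    have hsx : shiftSeq x ∈ X₁ := shift_mem hX₁ hx
    have h1 : α.drop 1 = word (shiftSeq x) m := by
      rw [← hw, hm, ← word_shift]
    have h2 := hshift ⟨x, hx⟩ ⟨shiftSeq x, hsx⟩ rfl
    rw [h1, phi_word h hiso hsx, h2, word_shift, ← hw, phi_word h hiso hx, hm]

/-- The extension set of a word. -/
def extSet (X : Set (ℕ → A₁)) (α : List A₁) : Set A₁ := {a | ∃ y, cat (α ++ [a]) y ∈ X}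

lemma mem_language_of_extSet {X : Set (ℕ → A₁)} {α : List A₁} {a : A₁}
    (ha : a ∈ extSet X α) : α ∈ language X ∧ α ++ [a] ∈ language X := by
  obtain ⟨y, hy⟩ := ha
  constructor
  · exact ⟨cat (α ++ [a]) y, hy, by
      rw [word_cat_le _ _ (by simp), List.take_left]⟩
  · exact ⟨cat (α ++ [a]) y, hy, word_cat _ _⟩

lemma phi_ext_repr (hiso : ∀ x y : ↥X₁, prodDist (h x).1 (h y).1 = prodDist x.1 y.1)
    {α : List A₁} {a : A₁} (hq : α ++ [a] ∈ language X₁) :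
    ∃ b : A₂, phi X₁ X₂ h (α ++ [a]) = phi X₁ X₂ h α ++ [b] := by
  have hlen : (phi X₁ X₂ h (α ++ [a])).length = α.length + 1 := by
    rw [phi_length h hq]; simp
  have hne : phi X₁ X₂ h (α ++ [a]) ≠ [] := by
    intro he; rw [he] at hlen; simp at hlen
  refine ⟨(phi X₁ X₂ h (α ++ [a])).getLast hne, ?_⟩
  conv_lhs => rw [← List.dropLast_append_getLast hne]
  congr 1
  rw [List.dropLast_eq_take, hlen]
  simp only [Nat.add_sub_cancel]
  rw [← phi_take h hiso hq, List.take_left]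

lemma extSet_infinite [Nonempty A₂]
    (hiso : ∀ x y : ↥X₁, prodDist (h x).1 (h y).1 = prodDist x.1 y.1)
    {α : List A₁} (hinf : (extSet X₁ α).Infinite) :
    (extSet X₂ (phi X₁ X₂ h α)).Infinite := by
  classical
  set g : A₁ → A₂ := fun a =>
    if hq : α ++ [a] ∈ language X₁ then (phi_ext_repr h hiso hq).choose
    else Classical.arbitrary A₂ with hg
  have hgval : ∀ a ∈ extSet X₁ α,
      phi X₁ X₂ h (α ++ [a]) = phi X₁ X₂ h α ++ [g a] := by
    intro a ha
    have hq := (mem_language_of_extSet ha).2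
    rw [hg]
    simp only [dif_pos hq]
    exact (phi_ext_repr h hiso hq).choose_spec
  have hinj : Set.InjOn g (extSet X₁ α) := by
    intro a ha a' ha' hgg
    have h1 := hgval a ha
    have h2 := hgval a' ha'
    have he : phi X₁ X₂ h (α ++ [a]) = phi X₁ X₂ h (α ++ [a']) := by rw [h1, h2, hgg]
    have he2 := congrArg (phi X₂ X₁ h.symm) he
    rw [psi_phi h hiso (mem_language_of_extSet ha).2,
      psi_phi h hiso (mem_language_of_extSet ha').2] at he2
    simpa using List.append_cancel_left he2
  have himg : g '' extSet X₁ α ⊆ extSet X₂ (phi X₁ X₂ h α) := by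
    rintro - ⟨a, ha, rfl⟩
    obtain ⟨y, hy⟩ := ha
    have hq := (mem_language_of_extSet (⟨y, hy⟩ : a ∈ extSet X₁ α)).2
    have hword : word (cat (α ++ [a]) y) ((α ++ [a]).length) = α ++ [a] := word_cat _ _
    have hlen : (α ++ [a]).length = α.length + 1 := by simp
    refine ⟨fun m => (h ⟨cat (α ++ [a]) y, hy⟩).1 ((α.length + 1) + m), ?_⟩
    have hphi : phi X₁ X₂ h (α ++ [a]) = word (h ⟨cat (α ++ [a]) y, hy⟩).1 (α.length + 1) := by
      conv_lhs => rw [← hword]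
      rw [phi_word h hiso hy, hlen]
    rw [← hgval a ⟨y, hy⟩, hphi, cat_word]
    exact (h ⟨cat (α ++ [a]) y, hy⟩).2
  exact (hinf.image hinj).mono himg

end Phi


section HH
variable {A₁ A₂ : Type*} (X₁ : Set (ℕ → A₁)) (X₂ : Set (ℕ → A₂)) (h : ↥X₁ ≃ ↥X₂)

lemma otw_fin_case (z : ↥(otw X₁)) (hz : ¬ ∃ x, x ∈ X₁ ∧ z.1 = infSeq x) :
    ∃ γ : List A₁, z.1 = finSeq γ ∧ (extSet X₁ γ).Infinite := by
  rcases z.2 with hz' | hz'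
  · obtain ⟨x, hx, hxe⟩ := hz'
    exact absurd ⟨x, hx, hxe.symm⟩ hz
  · obtain ⟨γ, hγ, hinf⟩ := hz'
    exact ⟨γ, hγ, hinf⟩

open Classical in
/-- The induced map on `X^OTW` (as raw sequences). -/
noncomputable def HH (z : ↥(otw X₁)) : ℕ → Option A₂ :=
  if hz : ∃ x, x ∈ X₁ ∧ z.1 = infSeq x then infSeq (h ⟨hz.choose, hz.choose_spec.1⟩).1
  else finSeq (phi X₁ X₂ h (otw_fin_case X₁ z hz).choose)

variable {X₁ X₂}

lemma HH_infSeq (z : ↥(otw X₁)) {x : ℕ → A₁} (hx : x ∈ X₁) (hzx : z.1 = infSeq x) :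
    HH X₁ X₂ h z = infSeq (h ⟨x, hx⟩).1 := by
  have hz : ∃ x, x ∈ X₁ ∧ z.1 = infSeq x := ⟨x, hx, hzx⟩
  rw [HH, dif_pos hz]
  have hcx : hz.choose = x :=
    infSeq_injective (hz.choose_spec.2.symm.trans hzx)
  have hsub : (⟨hz.choose, hz.choose_spec.1⟩ : ↥X₁) = ⟨x, hx⟩ := Subtype.ext hcx
  rw [hsub]

lemma HH_finSeq (z : ↥(otw X₁)) {γ : List A₁} (hzγ : z.1 = finSeq γ) :
    HH X₁ X₂ h z = finSeq (phi X₁ X₂ h γ) := by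
  have hz : ¬ ∃ x, x ∈ X₁ ∧ z.1 = infSeq x := by
    rintro ⟨x, -, hxe⟩
    exact infSeq_ne_finSeq x γ (hxe.symm.trans hzγ)
  rw [HH, dif_neg hz]
  have hcγ : (otw_fin_case X₁ z hz).choose = γ :=
    finSeq_injective ((otw_fin_case X₁ z hz).choose_spec.1.symm.trans hzγ)
  rw [hcγ]

lemma HH_mem [Nonempty A₂]
    (hiso : ∀ x y : ↥X₁, prodDist (h x).1 (h y).1 = prodDist x.1 y.1)
    (z : ↥(otw X₁)) : HH X₁ X₂ h z ∈ otw X₂ := by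
  rcases z.2 with hz' | hz'
  · obtain ⟨x, hx, hxe⟩ := hz'
    rw [HH_infSeq h z hx hxe.symm]
    exact Or.inl ⟨(h ⟨x, hx⟩).1, (h ⟨x, hx⟩).2, rfl⟩
  · obtain ⟨γ, hγ, hinf⟩ := hz'
    rw [HH_finSeq h z hγ]
    exact Or.inr ⟨phi X₁ X₂ h γ, rfl, extSet_infinite h hiso hinf⟩

lemma language_of_extSet_infinite {X : Set (ℕ → A₁)} {γ : List A₁}
    (hinf : (extSet X γ).Infinite) : γ ∈ language X := by
  obtain ⟨a, ha⟩ := hinf.nonempty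
  exact (mem_language_of_extSet ha).1

lemma HH_GG [Nonempty A₁] [Nonempty A₂]
    (hiso : ∀ x y : ↥X₁, prodDist (h x).1 (h y).1 = prodDist x.1 y.1)
    (z : ↥(otw X₁)) :
    HH X₂ X₁ h.symm ⟨HH X₁ X₂ h z, HH_mem h hiso z⟩ = z.1 := by
  rcases z.2 with hz' | hz'
  · obtain ⟨x, hx, hxe⟩ := hz'
    have h1 : HH X₁ X₂ h z = infSeq (h ⟨x, hx⟩).1 := HH_infSeq h z hx hxe.symm
    rw [HH_infSeq h.symm _ (h ⟨x, hx⟩).2 h1]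
    have he : (⟨(h ⟨x, hx⟩).1, (h ⟨x, hx⟩).2⟩ : ↥X₂) = h ⟨x, hx⟩ := rfl
    rw [he, Equiv.symm_apply_apply, ← hxe]
  · obtain ⟨γ, hγ, hinf⟩ := hz'
    have h1 : HH X₁ X₂ h z = finSeq (phi X₁ X₂ h γ) := HH_finSeq h z hγ
    rw [HH_finSeq h.symm _ h1, psi_phi h hiso (language_of_extSet_infinite hinf), hγ]

lemma HH_length (z : ↥(otw X₁)) : otwLength (HH X₁ X₂ h z) = otwLength z.1 := by
  rcases z.2 with hz' | hz'
  · obtain ⟨x, hx, hxe⟩ := hz'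
    rw [HH_infSeq h z hx hxe.symm, ← hxe, otwLength_infSeq, otwLength_infSeq]
  · obtain ⟨γ, hγ, hinf⟩ := hz'
    rw [HH_finSeq h z hγ, hγ, otwLength_finSeq, otwLength_finSeq,
      phi_length h (language_of_extSet_infinite hinf)]

lemma HH_shift (hX₁ : IsSubshift X₁)
    (hiso : ∀ x y : ↥X₁, prodDist (h x).1 (h y).1 = prodDist x.1 y.1)
    (hshift : ∀ x y : ↥X₁, y.1 = shiftSeq x.1 → (h y).1 = shiftSeq (h x).1)
    (z w : ↥(otw X₁)) (hw : w.1 = shiftO z.1) :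
    HH X₁ X₂ h w = shiftO (HH X₁ X₂ h z) := by
  rcases z.2 with hz' | hz'
  · obtain ⟨x, hx, hxe⟩ := hz'
    have hsx : shiftSeq x ∈ X₁ := shift_mem hX₁ hx
    have hwx : w.1 = infSeq (shiftSeq x) := by rw [hw, ← hxe, shiftO_infSeq]
    rw [HH_infSeq h w hsx hwx, HH_infSeq h z hx hxe.symm, shiftO_infSeq,
      hshift ⟨x, hx⟩ ⟨shiftSeq x, hsx⟩ rfl]
  · obtain ⟨γ, hγ, hinf⟩ := hz'
    have hwγ : w.1 = finSeq (γ.drop 1) := by rw [hw, hγ, shiftO_finSeq]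
    rw [HH_finSeq h w hwγ, HH_finSeq h z hγ, shiftO_finSeq,
      phi_drop h hX₁ hiso hshift (language_of_extSet_infinite hinf)]

end HH


section Crux
variable {A₁ A₂ : Type*} (X₁ : Set (ℕ → A₁)) (X₂ : Set (ℕ → A₂)) (h : ↥X₁ ≃ ↥X₂)

/-- Agreement of an `Option`-sequence with a finite word up to position `n`. -/
def Agree {A : Type*} (z : ℕ → Option A) (α : List A) (n : ℕ) : Prop :=
  ∀ i < n, z i = finSeq α i

/-- The next-letter map. -/
noncomputable def nxt (α : List A₁) (a : A₁) : Option A₂ :=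
  finSeq (phi X₁ X₂ h (α ++ [a])) α.length

variable {X₁ X₂}

lemma agree_take {A : Type*} {z : ℕ → Option A} {α : List A} {n : ℕ}
    (hag : Agree z α n) (_hn : n ≤ α.length) : Agree z (α.take n) n := by
  intro j hj
  rw [hag j hj, finSeq_eq_get?, finSeq_eq_get?, List.getElem?_take_of_lt hj]

lemma agree_infSeq {x : ℕ → A₁} {α : List A₁} (hag : Agree (infSeq x) α α.length) :
    α = word x α.length := by
  apply List.ext_get (by simp [word])
  intro i h1 h2
  have hi := hag i h1
  rw [finSeq_lt α h1] at hi
  simp only [infSeq] at hi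
  rw [word_get]
  exact (Option.some_injective _ hi).symm

lemma agree_finSeq {γ α : List A₁} (hag : Agree (finSeq γ) α α.length) :
    α.length ≤ γ.length ∧ α = γ.take α.length := by
  have hle : α.length ≤ γ.length := by
    by_contra hlt
    push_neg at hlt
    have hcon := hag γ.length hlt
    rw [finSeq_ge γ le_rfl, finSeq_lt α hlt] at hcon
    cases hcon
  refine ⟨hle, ?_⟩
  apply List.ext_get (by simp [hle])
  intro i h1 h2
  have hi : i < γ.length := lt_of_lt_of_le h1 hle
  have hcon := hag i h1
  rw [finSeq_lt α h1, finSeq_lt γ hi] at hcon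
  have h3 : γ.get ⟨i, hi⟩ = α.get ⟨i, h1⟩ := Option.some_injective _ hcon
  simp only [List.get_eq_getElem, List.getElem_take] at h3 ⊢
  exact h3.symm

lemma prefix_lang (z : ↥(otw X₁)) {α : List A₁} (hag : Agree z.1 α α.length) :
    α ∈ language X₁ := by
  rcases z.2 with hz' | hz'
  · obtain ⟨x, hx, hxe⟩ := hz'
    have hagx : Agree (infSeq x) α α.length := hxe ▸ hag
    have hα : α = word x α.length := agree_infSeq hagx
    exact ⟨x, hx, hα.symm⟩
  · obtain ⟨γ, hγ, hinf⟩ := hz'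
    have hagγ : Agree (finSeq γ) α α.length := hγ ▸ hag
    obtain ⟨hle, htake⟩ := agree_finSeq hagγ
    rw [htake]
    exact take_mem_language (language_of_extSet_infinite hinf) _

lemma prefix_ext_lang (z : ↥(otw X₁)) {α : List A₁} {a : A₁}
    (hag : Agree z.1 α α.length) (hz : z.1 α.length = some a) :
    α ++ [a] ∈ language X₁ := by
  apply prefix_lang z
  intro j hj
  rw [List.length_append, List.length_singleton] at hj
  rcases lt_or_ge j α.length with hj' | hj'
  · rw [hag j hj', finSeq_eq_get?, finSeq_eq_get?, List.getElem?_append_left hj']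
  · have hja : j = α.length := by omega
    subst hja
    rw [hz, finSeq_eq_get?, List.getElem?_concat_length]

lemma crux (hiso : ∀ x y : ↥X₁, prodDist (h x).1 (h y).1 = prodDist x.1 y.1)
    (z : ↥(otw X₁)) (α : List A₁) (hag : Agree z.1 α α.length) :
    HH X₁ X₂ h z α.length = (z.1 α.length).bind (nxt X₁ X₂ h α) := by
  rcases z.2 with hz' | hz'
  · obtain ⟨x, hx, hxe⟩ := hz'
    have hagx : Agree (infSeq x) α α.length := hxe ▸ hag
    have hα : α = word x α.length := agree_infSeq hagx
    rw [HH_infSeq h z hx hxe.symm]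
    have hz1 : z.1 α.length = some (x α.length) := by rw [← hxe]; rfl
    rw [hz1, Option.bind_some, nxt]
    have h1 : α ++ [x α.length] = word x (α.length + 1) := by
      rw [word_succ, ← hα]
    rw [h1, phi_word h hiso hx, finSeq_lt _ (by simp), word_get]
    rfl
  · obtain ⟨γ, hγ, hinf⟩ := hz'
    have hγL := language_of_extSet_infinite hinf
    have hagγ : Agree (finSeq γ) α α.length := hγ ▸ hag
    obtain ⟨hle, htake⟩ := agree_finSeq hagγ
    rw [HH_finSeq h z hγ, hγ]
    rcases lt_or_ge α.length γ.length with hlt | hge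
    · rw [finSeq_lt γ hlt, Option.bind_some, nxt]
      have h1 : α ++ [γ.get ⟨α.length, hlt⟩] = γ.take (α.length + 1) := by
        rw [List.take_succ, ← htake]
        congr 1
        rw [List.getElem?_eq_getElem hlt]
        rfl
      rw [h1, phi_take h hiso hγL]
      have hlen2 : (phi X₁ X₂ h γ).length = γ.length := phi_length h hγL
      rw [finSeq_lt (phi X₁ X₂ h γ) (by omega),
        finSeq_lt _ (by rw [List.length_take, hlen2]; omega)]
      simp [List.getElem_take]
    · rw [finSeq_ge γ hge, finSeq_ge _ (by rw [phi_length h hγL]; omega)]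
      rfl

lemma crux_get (hiso : ∀ x y : ↥X₁, prodDist (h x).1 (h y).1 = prodDist x.1 y.1)
    {α : List A₁} (hαL : α ∈ language X₁) {i : ℕ} (hi : i < α.length) :
    nxt X₁ X₂ h (α.take i) (α.get ⟨i, hi⟩) = finSeq (phi X₁ X₂ h α) i := by
  rw [nxt]
  have h1 : α.take i ++ [α.get ⟨i, hi⟩] = α.take (i + 1) := by
    rw [List.take_succ]
    congr 1
    rw [List.getElem?_eq_getElem hi]
    rfl
  rw [h1, phi_take h hiso hαL, List.length_take, min_eq_left (le_of_lt hi),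
    finSeq_eq_get?, finSeq_eq_get?, List.getElem?_take_of_lt (by omega)]

lemma nxt_inj (hiso : ∀ x y : ↥X₁, prodDist (h x).1 (h y).1 = prodDist x.1 y.1)
    {α : List A₁} {a a' : A₁} (hq : α ++ [a] ∈ language X₁) (hq' : α ++ [a'] ∈ language X₁)
    (he : nxt X₁ X₂ h α a = nxt X₁ X₂ h α a') : a = a' := by
  obtain ⟨b, hb⟩ := phi_ext_repr h hiso hq
  obtain ⟨b', hb'⟩ := phi_ext_repr h hiso hq'
  have hαL : α ∈ language X₁ := by
    have htl := take_mem_language hq α.length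
    rwa [List.take_left] at htl
  have hlen : (phi X₁ X₂ h α).length = α.length := phi_length h hαL
  rw [nxt, nxt, hb, hb'] at he
  rw [finSeq_eq_get?, finSeq_eq_get?] at he
  rw [show α.length = (phi X₁ X₂ h α).length from hlen.symm] at he
  rw [List.getElem?_concat_length, List.getElem?_concat_length] at he
  have hbb : b = b' := Option.some_injective _ he
  subst hbb
  have hee : phi X₁ X₂ h (α ++ [a]) = phi X₁ X₂ h (α ++ [a']) := by rw [hb, hb']
  have he2 := congrArg (phi X₂ X₁ h.symm) hee
  rw [psi_phi h hiso hq, psi_phi h hiso hq'] at he2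
  simpa using List.append_cancel_left he2

lemma HH_agree (hiso : ∀ x y : ↥X₁, prodDist (h x).1 (h y).1 = prodDist x.1 y.1)
    (z : ↥(otw X₁)) {α : List A₁} (hαL : α ∈ language X₁) :
    Agree z.1 α α.length ↔ Agree (HH X₁ X₂ h z) (phi X₁ X₂ h α) α.length := by
  have hmin : ∀ i, i ≤ α.length → (α.take i).length = i := fun i hi => by
    rw [List.length_take, min_eq_left hi]
  constructor
  · intro hag i hi
    have hpre : Agree z.1 (α.take i) (α.take i).length := by
      rw [hmin i (le_of_lt hi)]
      exact agree_take (fun j hj => hag j (lt_trans hj hi)) (le_of_lt hi)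
    have hc := crux h hiso z (α.take i) hpre
    rw [hmin i (le_of_lt hi)] at hc
    rw [hc, hag i hi, finSeq_lt α hi, Option.bind_some, crux_get h hiso hαL hi]
  · intro hag
    intro i
    induction i using Nat.strong_induction_on with
    | _ i IH =>
      intro hi
      have hpre : Agree z.1 (α.take i) (α.take i).length := by
        rw [hmin i (le_of_lt hi)]
        exact agree_take (fun j hj => IH j hj (lt_trans hj hi)) (le_of_lt hi)
      have hagi : Agree z.1 (α.take i) (α.take i).length := hpre
      have hc := crux h hiso z (α.take i) hpre
      rw [hmin i (le_of_lt hi)] at hc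
      have hlen : i < (phi X₁ X₂ h α).length := by rw [phi_length h hαL]; exact hi
      have hHH : HH X₁ X₂ h z i = some ((phi X₁ X₂ h α).get ⟨i, hlen⟩) := by
        rw [hag i hi, finSeq_lt _ hlen]
      rw [hHH] at hc
      rcases hoz : z.1 i with - | a
      · rw [hoz, Option.bind_none] at hc
        cases hc
      · rw [hoz, Option.bind_some] at hc
        have hozi : z.1 (α.take i).length = some a := by rw [hmin i (le_of_lt hi)]; exact hoz
        have hq : α.take i ++ [a] ∈ language X₁ := prefix_ext_lang z hagi hozi
        have hq' : α.take i ++ [α.get ⟨i, hi⟩] ∈ language X₁ := by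
          have h1 : α.take i ++ [α.get ⟨i, hi⟩] = α.take (i + 1) := by
            rw [List.take_succ]
            congr 1
            rw [List.getElem?_eq_getElem hi]
            rfl
          rw [h1]
          exact take_mem_language hαL _
        have heq : nxt X₁ X₂ h (α.take i) a = nxt X₁ X₂ h (α.take i) (α.get ⟨i, hi⟩) := by
          rw [crux_get h hiso hαL hi, ← hc, finSeq_lt _ hlen]
        have haa := nxt_inj h hiso hq hq' heq
        rw [haa, finSeq_lt α hi]

lemma gencyl_iff_agree {A : Type*} {z : ℕ → Option A} {α : List A} {F : Finset A} :
    z ∈ gencyl α F ↔ Agree z α α.length ∧ ∀ a ∈ F, z α.length ≠ some a := by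
  constructor
  · rintro ⟨h1, h2⟩
    refine ⟨fun i hi => ?_, h2⟩
    rw [h1 ⟨i, hi⟩, finSeq_lt α hi]
  · rintro ⟨h1, h2⟩
    refine ⟨fun i => ?_, h2⟩
    rw [h1 i i.2, finSeq_lt α i.2]

lemma preimage_gencyl [Nonempty A₂]
    (hiso : ∀ x y : ↥X₁, prodDist (h x).1 (h y).1 = prodDist x.1 y.1)
    {β : List A₂} (hβ : β ∈ language X₂) (F : Finset A₂) :
    ∃ α ∈ language X₁, ∃ F' : Finset A₁,
      ∀ z : ↥(otw X₁), (HH X₁ X₂ h z ∈ gencyl β F ↔ z.1 ∈ gencyl α F') := by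
  classical
  set α := phi X₂ X₁ h.symm β with hα
  have hαL : α ∈ language X₁ := phi_mem h.symm (hiso_symm h hiso) hβ
  have hφα : phi X₁ X₂ h α = β := by
    have hps := psi_phi h.symm (hiso_symm h hiso) hβ
    rwa [Equiv.symm_symm] at hps
  have hlen : α.length = β.length := phi_length h.symm hβ
  set S : Set A₁ :=
    ⋃ b ∈ (F : Set A₂), {a : A₁ | α ++ [a] ∈ language X₁ ∧ nxt X₁ X₂ h α a = some b}
    with hS
  have hSfin : S.Finite :=
    F.finite_toSet.biUnion fun b _ => Set.Subsingleton.finite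
      (fun a ha a' ha' => nxt_inj h hiso ha.1 ha'.1 (ha.2.trans ha'.2.symm))
  refine ⟨α, hαL, hSfin.toFinset, fun z => ?_⟩
  rw [gencyl_iff_agree, gencyl_iff_agree]
  have hkey := HH_agree h hiso z hαL
  rw [hφα] at hkey
  have hag_iff : Agree (HH X₁ X₂ h z) β β.length ↔ Agree z.1 α α.length := by
    rw [← hlen]; exact hkey.symm
  constructor
  · rintro ⟨hag, hF⟩
    have hagz : Agree z.1 α α.length := hag_iff.1 hag
    refine ⟨hagz, fun a haF' hza => ?_⟩
    rw [Set.Finite.mem_toFinset, hS] at haF'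
    simp only [Set.mem_iUnion, Set.mem_setOf_eq] at haF'
    obtain ⟨b, hbF, -, hnb⟩ := haF'
    apply hF b hbF
    have hc := crux h hiso z α hagz
    rw [← hlen, hc, hza, Option.bind_some, hnb]
  · rintro ⟨hagz, hF'⟩
    refine ⟨hag_iff.2 hagz, fun b hbF hHb => ?_⟩
    have hc := crux h hiso z α hagz
    rw [← hlen, hc] at hHb
    rcases hoz : z.1 α.length with - | a
    · rw [hoz, Option.bind_none] at hHb
      cases hHb
    · rw [hoz, Option.bind_some] at hHb
      have hq : α ++ [a] ∈ language X₁ := prefix_ext_lang z hagz hoz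
      apply hF' a _ hoz
      rw [Set.Finite.mem_toFinset, hS]
      simp only [Set.mem_iUnion, Set.mem_setOf_eq]
      exact ⟨b, hbF, hq, hHb⟩

end Crux

/-- if two subshifts over countably infinite alphabets are isometrically
conjugate for the product metrics, then the associated OTW-subshifts are conjugate. -/
theorem stmt0 {A₁ A₂ : Type*} [Countable A₁] [Infinite A₁] [Countable A₂] [Infinite A₂]
    (X₁ : Set (ℕ → A₁)) (X₂ : Set (ℕ → A₂)) (hX₁ : IsSubshift X₁) (hX₂ : IsSubshift X₂)
    (h : ↥X₁ ≃ ↥X₂)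
    (hiso : ∀ x y : ↥X₁, prodDist (h x).1 (h y).1 = prodDist x.1 y.1)
    (hshift : ∀ x y : ↥X₁, y.1 = shiftSeq x.1 → (h y).1 = shiftSeq (h x).1) :
    ∃ H : ↥(otw X₁) ≃ ↥(otw X₂), IsOTWConjugacy X₁ X₂ H := by
  have hisoS := hiso_symm h hiso
  let Hm : ↥(otw X₁) → ↥(otw X₂) := fun z => ⟨HH X₁ X₂ h z, HH_mem h hiso z⟩
  let Gm : ↥(otw X₂) → ↥(otw X₁) := fun w => ⟨HH X₂ X₁ h.symm w, HH_mem h.symm hisoS w⟩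
  have hGH : ∀ z, Gm (Hm z) = z := fun z => Subtype.ext (HH_GG h hiso z)
  have hHG : ∀ w, Hm (Gm w) = w := by
    intro w
    apply Subtype.ext
    have hgw := HH_GG h.symm hisoS w
    rw [Equiv.symm_symm] at hgw
    exact hgw
  refine ⟨Equiv.mk Hm Gm hGH hHG, ?_, ?_, ?_, ?_⟩
  · show @Continuous _ _ (otwTop X₁) (otwTop X₂) Hm
    unfold otwTop
    apply continuous_generateFrom_iff.mpr
    rintro s ⟨β, hβ, F, rfl⟩
    obtain ⟨α, hαL, F', hiff⟩ := preimage_gencyl h hiso hβ F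
    have hpre : Hm ⁻¹' (Subtype.val ⁻¹' gencyl β F) = Subtype.val ⁻¹' gencyl α F' := by
      ext z
      exact hiff z
    rw [hpre]
    exact TopologicalSpace.isOpen_generateFrom_of_mem ⟨α, hαL, F', rfl⟩
  · show @Continuous _ _ (otwTop X₂) (otwTop X₁) Gm
    unfold otwTop
    apply continuous_generateFrom_iff.mpr
    rintro s ⟨β, hβ, F, rfl⟩
    obtain ⟨α, hαL, F', hiff⟩ := preimage_gencyl h.symm hisoS hβ F
    have hpre : Gm ⁻¹' (Subtype.val ⁻¹' gencyl β F) = Subtype.val ⁻¹' gencyl α F' := by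
      ext w
      exact hiff w
    rw [hpre]
    exact TopologicalSpace.isOpen_generateFrom_of_mem ⟨α, hαL, F', rfl⟩
  · intro z
    exact HH_length h z
  · intro z w hw
    exact HH_shift h hX₁ hiso hshift z w hw

end SubshiftPaper
end

section
/- Let A be a C*-algebra over ℂ and let B ⊆ A be a *-subalgebra that is commutative and is generated, as a ℂ-algebra, by a set of projections of A (self-adjoint idempotents). Then for every complex Hilbert space H and every *-homomorphism π : B → B(H) (a ℂ-linear, multiplicative, star-preserving map into the bounded operators on H), one has ‖π(b)‖ ≤ ‖b‖ for all b ∈ B; that is, every representation of B is continuous with respect to the norm induced from A. -/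
section algebra_helpers
variable {R : Type*} [NonUnitalRing R]

lemma aux_mul_idem {x y : R} (h : y * x = x * y) (hx : x * x = x) (hy : y * y = y) :
    x * y * (x * y) = x * y := by
  calc x * y * (x * y) = x * (y * x) * y := by simp only [mul_assoc]
    _ = x * (x * y) * y := by rw [h]
    _ = x * x * (y * y) := by simp only [mul_assoc]
    _ = x * y := by rw [hx, hy]

lemma aux_sub_idem {x F : R} (h : F * x = x * F) (hx : x * x = x) (hF : F * F = F) :
    (x - x * F) * (x - x * F) = x - x * F := by
  have h1 : x * (x * F) = x * F := by rw [← mul_assoc, hx]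
  have h2 : x * F * x = x * F := by rw [mul_assoc, h, ← mul_assoc, hx]
  have h3 : x * F * (x * F) = x * F := by
    rw [mul_assoc, ← mul_assoc F, h, mul_assoc, hF, ← mul_assoc, hx]
  rw [sub_mul, mul_sub, mul_sub, h1, h2, h3, hx]
  abel

lemma aux_o1 {x y x' y' : R} (h : y * x' = x' * y) :
    x * y * (x' * y') = x * x' * (y * y') := by
  rw [mul_assoc, ← mul_assoc y, h, mul_assoc, ← mul_assoc, ← mul_assoc]

lemma aux_o2 {x y z F : R} (hyz : y * z = z * y) (hyF : y * F = y) :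
    (x * y) * (z - z * F) = 0 := by
  have h1 : x * y * z = x * z * y := by rw [mul_assoc, hyz, ← mul_assoc]
  have h2 : x * y * (z * F) = x * z * y := by
    rw [mul_assoc, ← mul_assoc y, hyz, mul_assoc z, hyF, ← mul_assoc]
  rw [mul_sub, h1, h2, sub_self]

lemma aux_o3 {x y w E : R} (hyE : y * E = E * y) (hxE : x * E = x) :
    (x * y) * (w - E * w) = 0 := by
  have h2 : x * y * (E * w) = x * y * w := by
    rw [mul_assoc, ← mul_assoc y, hyE, ← mul_assoc, ← mul_assoc, hxE, mul_assoc]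
  rw [mul_sub, h2, mul_assoc, sub_self]

lemma aux_o4 {x z F : R} (hxz : x * z = 0) (hFz : F * z = z * F) :
    (x - x * F) * (z - z * F) = 0 := by
  have h1 : x * (z * F) = 0 := by rw [← mul_assoc, hxz, zero_mul]
  have h2 : x * F * z = 0 := by rw [mul_assoc, hFz, h1]
  have h3 : x * F * (z * F) = 0 := by rw [mul_assoc, ← mul_assoc F, hFz, mul_assoc z, ← mul_assoc,
    ← mul_assoc, hxz, zero_mul, zero_mul]
  rw [sub_mul, mul_sub, mul_sub, h1, h2, h3, hxz]
  abel

lemma aux_o5 {x w E F : R} (hxE : x * E = x) (hFw : F * w = w) (hEF : F * E = E * F) :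
    (x - x * F) * (w - E * w) = 0 := by
  have h1 : x * (E * w) = x * w := by rw [← mul_assoc, hxE]
  have h2 : x * F * w = x * w := by rw [mul_assoc, hFw]
  have h3 : x * F * (E * w) = x * w := by
    rw [mul_assoc, ← mul_assoc F, hEF, mul_assoc E, hFw, ← mul_assoc, hxE]
  rw [sub_mul, mul_sub, mul_sub, h1, h2, h3]
  abel

lemma aux_o6 {w w' E : R} (hww : w * w' = 0) (hwE : w * E = E * w) :
    (w - E * w) * (w' - E * w') = 0 := by
  have h1 : w * (E * w') = 0 := by rw [← mul_assoc, hwE, mul_assoc, hww, mul_zero]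
  have h2 : E * w * w' = 0 := by rw [mul_assoc, hww, mul_zero]
  have h3 : E * w * (E * w') = 0 := by rw [mul_assoc, h1, mul_zero]
  rw [sub_mul, mul_sub, mul_sub, h1, h2, h3, hww]
  abel

end algebra_helpers

section norm_helper

lemma aux_norm_le {R : Type*} [NonUnitalCStarAlgebra R] [PartialOrder R] [StarOrderedRing R]
    {ι : Type*} [Fintype ι] (f : ι → R) (c : ι → ℂ)
    (hsa : ∀ i, star (f i) = f i) (hidem : ∀ i, f i * f i = f i)
    (horth : ∀ i j, i ≠ j → f i * f j = 0)
    {M : ℝ} (hM : 0 ≤ M) (hc : ∀ i, ‖c i‖ ≤ M) :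
    ‖∑ i, c i • f i‖ ≤ M := by
  set x := ∑ i, c i • f i with hx
  have hxx : star x * x = ∑ i, ((‖c i‖ ^ 2 : ℝ) : ℂ) • f i := by
    rw [hx, star_sum, Finset.sum_mul_sum]
    refine Finset.sum_congr rfl fun i _ => ?_
    rw [Finset.sum_eq_single i]
    · rw [star_smul, smul_mul_smul_comm, hsa i, hidem i]
      congr 1
      rw [Complex.star_def, RCLike.conj_mul]
      norm_cast
    · intro j _ hj
      rw [star_smul, smul_mul_smul_comm, hsa i, horth i j (Ne.symm hj), smul_zero]
    · simp
  set F := ∑ i, f i with hF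
  have hFF : F * F = F := by
    rw [hF, Finset.sum_mul]
    refine Finset.sum_congr rfl fun i _ => ?_
    rw [Finset.mul_sum, Finset.sum_eq_single i (fun j _ hj => horth i j (Ne.symm hj)) (by simp),
      hidem i]
  have hFsa : star F = F := by rw [hF, star_sum]; exact Finset.sum_congr rfl fun i _ => hsa i
  have hFnorm : ‖F‖ ≤ 1 := by
    have h := CStarRing.norm_star_mul_self (x := F)
    rw [hFsa, hFF] at h
    nlinarith [norm_nonneg F]
  have hle : star x * x ≤ ((M ^ 2 : ℝ) : ℂ) • F := by
    rw [← sub_nonneg]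
    have key : ((M ^ 2 : ℝ) : ℂ) • F - star x * x
        = ∑ i, ((M ^ 2 - ‖c i‖ ^ 2 : ℝ) : ℂ) • f i := by
      rw [hxx, hF, Finset.smul_sum, ← Finset.sum_sub_distrib]
      refine Finset.sum_congr rfl fun i _ => ?_
      rw [← sub_smul]
      norm_cast
    rw [key]
    refine Finset.sum_nonneg fun i _ => ?_
    have hr0 : (0:ℝ) ≤ M ^ 2 - ‖c i‖ ^ 2 := by nlinarith [hc i, norm_nonneg (c i)]
    have key2 : ((M ^ 2 - ‖c i‖ ^ 2 : ℝ) : ℂ) • f i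
        = star (((Real.sqrt (M ^ 2 - ‖c i‖ ^ 2) : ℝ) : ℂ) • f i)
          * (((Real.sqrt (M ^ 2 - ‖c i‖ ^ 2) : ℝ) : ℂ) • f i) := by
      rw [star_smul, smul_mul_smul_comm, hsa i, hidem i, Complex.star_def,
        Complex.conj_ofReal, ← Complex.ofReal_mul, Real.mul_self_sqrt hr0]
    rw [key2]
    exact star_mul_self_nonneg _
  have h1 : ‖star x * x‖ ≤ ‖((M ^ 2 : ℝ) : ℂ) • F‖ :=
    CStarAlgebra.norm_le_norm_of_nonneg_of_le (star_mul_self_nonneg x) hle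
  rw [CStarRing.norm_star_mul_self, norm_smul] at h1
  have h2 : ‖((M ^ 2 : ℝ) : ℂ)‖ = M ^ 2 := by
    rw [Complex.norm_real, Real.norm_eq_abs, abs_of_nonneg (by positivity)]
  rw [h2] at h1
  nlinarith [norm_nonneg x, norm_nonneg F]

end norm_helper

/-- if `B` is a commutative *-subalgebra of a C*-algebra `A` generated, as a
ℂ-algebra, by projections of `A`, then every representation of `B` on a Hilbert space is
contractive for the norm induced from `A`. -/
theorem stmt6 {A : Type*} [NormedRing A] [StarRing A] [CStarRing A] [NormedAlgebra ℂ A]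
    [StarModule ℂ A] [CompleteSpace A]
    (B : NonUnitalStarSubalgebra ℂ A)
    (hcomm : ∀ x ∈ B, ∀ y ∈ B, x * y = y * x)
    (S : Set A) (hS : ∀ p ∈ S, IsSelfAdjoint p ∧ IsIdempotentElem p)
    (hgen : B.toNonUnitalSubalgebra = NonUnitalAlgebra.adjoin ℂ S)
    {H : Type*} [NormedAddCommGroup H] [InnerProductSpace ℂ H] [CompleteSpace H]
    (π : B → (H →L[ℂ] H))
    (hadd : ∀ x y : B, π (x + y) = π x + π y)
    (hsmul : ∀ (c : ℂ) (x : B), π (c • x) = c • π x)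
    (hmul : ∀ x y : B, π (x * y) = π x * π y)
    (hstar : ∀ x : B, π (star x) = star (π x)) :
    ∀ b : B, ‖π b‖ ≤ ‖b‖ := by
  classical
  -- S ⊆ B
  have hSsubB : ∀ p ∈ S, p ∈ B := by
    intro p hp
    have : p ∈ B.toNonUnitalSubalgebra := by
      rw [hgen]; exact NonUnitalAlgebra.subset_adjoin ℂ hp
    exact this
  -- elements of the semigroup closure of S are projections in B
  have hclos : ∀ q ∈ Subsemigroup.closure S, q ∈ B ∧ star q = q ∧ q * q = q := by
    intro q hq
    induction hq using Subsemigroup.closure_induction with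
    | mem x hx => exact ⟨hSsubB x hx, (hS x hx).1, (hS x hx).2⟩
    | mul x y _ _ ihx ihy =>
      refine ⟨mul_mem ihx.1 ihy.1, ?_, ?_⟩
      · rw [star_mul, ihx.2.1, ihy.2.1, hcomm y ihy.1 x ihx.1]
      · exact aux_mul_idem (hcomm y ihy.1 x ihx.1) ihx.2.2 ihy.2.2
  have hspan : ∀ a, a ∈ B → a ∈ Submodule.span ℂ (Subsemigroup.closure S : Set A) := by
    intro a ha
    have h2 : a ∈ (NonUnitalAlgebra.adjoin ℂ S).toSubmodule := by
      rw [← hgen]; exact ha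
    rwa [NonUnitalAlgebra.adjoin_eq_span] at h2
  -- key decomposition
  have key : ∀ a, a ∈ Submodule.span ℂ (Subsemigroup.closure S : Set A) →
      ∃ (ι : Type) (_ : Fintype ι) (e : ι → A) (c : ι → ℂ),
      (∀ i, e i ∈ B) ∧ (∀ i, star (e i) = e i) ∧ (∀ i, e i * e i = e i) ∧
      (∀ i j, i ≠ j → e i * e j = 0) ∧ a = ∑ i, c i • e i := by
    intro a ha
    induction ha using Submodule.span_induction with
    | mem x hx =>
      exact ⟨PUnit, inferInstance, fun _ => x, fun _ => 1, fun _ => (hclos x hx).1,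
        fun _ => (hclos x hx).2.1, fun _ => (hclos x hx).2.2,
        fun i j hij => absurd (Subsingleton.elim i j) hij, by simp⟩
    | zero =>
      exact ⟨PEmpty, inferInstance, fun i => i.elim, fun i => i.elim, fun i => i.elim,
        fun i => i.elim, fun i => i.elim, fun i => i.elim, by simp⟩
    | smul r x _ ih =>
      obtain ⟨ι, _, e, c, heB, hesa, heid, heo, hesum⟩ := ih
      exact ⟨ι, inferInstance, e, fun i => r * c i, heB, hesa, heid, heo, by
        rw [hesum, Finset.smul_sum]; exact Finset.sum_congr rfl fun i _ => by simp [smul_smul]⟩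
    | add x y _ _ ihx ihy =>
      obtain ⟨ι, _, e, c, heB, hesa, heid, heo, hesum⟩ := ihx
      obtain ⟨κ, _, f, d, hfB, hfsa, hfid, hfo, hfsum⟩ := ihy
      set E : A := ∑ i, e i with hE
      set F : A := ∑ j, f j with hF
      have hEB : E ∈ B := sum_mem fun i _ => heB i
      have hFB : F ∈ B := sum_mem fun j _ => hfB j
      have heE : ∀ i, e i * E = e i := by
        intro i
        rw [hE, Finset.mul_sum, Finset.sum_eq_single i
          (fun k _ hk => heo i k (Ne.symm hk)) (by simp), heid i]
      have hEe : ∀ i, E * e i = e i := fun i => by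
        rw [← hcomm (e i) (heB i) E hEB, heE i]
      have hfF : ∀ j, f j * F = f j := by
        intro j
        rw [hF, Finset.mul_sum, Finset.sum_eq_single j
          (fun k _ hk => hfo j k (Ne.symm hk)) (by simp), hfid j]
      have hFf : ∀ j, F * f j = f j := fun j => by
        rw [← hcomm (f j) (hfB j) F hFB, hfF j]
      have hEE : E * E = E := by
        rw [hE, Finset.sum_mul]
        exact Finset.sum_congr rfl fun i _ => by rw [← hE, heE i]
      have hFF : F * F = F := by
        rw [hF, Finset.sum_mul]
        exact Finset.sum_congr rfl fun j _ => by rw [← hF, hfF j]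
      have hFsa : star F = F := by
        rw [hF, star_sum]; exact Finset.sum_congr rfl fun j _ => hfsa j
      have cmEF : F * E = E * F := hcomm F hFB E hEB
      have cm_fe : ∀ j i, f j * e i = e i * f j := fun j i =>
        hcomm (f j) (hfB j) (e i) (heB i)
      have cm_fE : ∀ j, f j * E = E * f j := fun j => hcomm (f j) (hfB j) E hEB
      have cm_Fe : ∀ i, F * e i = e i * F := fun i => hcomm F hFB (e i) (heB i)
      set g : (ι × κ) ⊕ ι ⊕ κ → A := Sum.elim (fun p : ι × κ => e p.1 * f p.2)
        (Sum.elim (fun i => e i - e i * F) (fun j => f j - E * f j)) with hg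
      have hgB : ∀ p, g p ∈ B := by
        rintro (⟨i, j⟩ | i | j)
        · exact mul_mem (heB i) (hfB j)
        · exact sub_mem (heB i) (mul_mem (heB i) hFB)
        · exact sub_mem (hfB j) (mul_mem hEB (hfB j))
      have hsymm : ∀ p q, g p * g q = g q * g p := fun p q => hcomm _ (hgB p) _ (hgB q)
      refine ⟨(ι × κ) ⊕ ι ⊕ κ, inferInstance, g,
        Sum.elim (fun p => c p.1 + d p.2) (Sum.elim c d), hgB, ?_, ?_, ?_, ?_⟩
      · rintro (⟨i, j⟩ | i | j)
        · show star (e i * f j) = e i * f j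
          rw [star_mul, hesa i, hfsa j, cm_fe j i]
        · show star (e i - e i * F) = e i - e i * F
          rw [star_sub, star_mul, hesa i, hFsa, cm_Fe i]
        · show star (f j - E * f j) = f j - E * f j
          have hEsa : star E = E := by
            rw [hE, star_sum]; exact Finset.sum_congr rfl fun i _ => hesa i
          rw [star_sub, star_mul, hfsa j, hEsa, cm_fE j]
      · rintro (⟨i, j⟩ | i | j)
        · exact aux_mul_idem (cm_fe j i) (heid i) (hfid j)
        · exact aux_sub_idem (cm_Fe i) (heid i) hFF
        · show (f j - E * f j) * (f j - E * f j) = f j - E * f j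
          rw [← cm_fE j]
          exact aux_sub_idem (cm_fE j).symm (hfid j) hEE
      · rintro (⟨i, j⟩ | i | j) (⟨i', j'⟩ | i' | j') hpq
        · show e i * f j * (e i' * f j') = 0
          rw [aux_o1 (cm_fe j i')]
          by_cases hii : i = i'
          · subst hii
            have hjj : j ≠ j' := by simpa using hpq
            rw [hfo j j' hjj, mul_zero]
          · rw [heo i i' hii, zero_mul]
        · show e i * f j * (e i' - e i' * F) = 0
          exact aux_o2 (cm_fe j i') (hfF j)
        · show e i * f j * (f j' - E * f j') = 0
          exact aux_o3 (cm_fE j) (heE i)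
        · rw [hsymm]
          show e i' * f j' * (e i - e i * F) = 0
          exact aux_o2 (cm_fe j' i) (hfF j')
        · show (e i - e i * F) * (e i' - e i' * F) = 0
          have hii : i ≠ i' := by simpa using hpq
          exact aux_o4 (heo i i' hii) (cm_Fe i')
        · show (e i - e i * F) * (f j' - E * f j') = 0
          exact aux_o5 (heE i) (hFf j') cmEF
        · rw [hsymm]
          show e i' * f j' * (f j - E * f j) = 0
          exact aux_o3 (cm_fE j') (heE i')
        · rw [hsymm]
          show (e i' - e i' * F) * (f j - E * f j) = 0
          exact aux_o5 (heE i') (hFf j) cmEF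
        · show (f j - E * f j) * (f j' - E * f j') = 0
          have hjj : j ≠ j' := by simpa using hpq
          exact aux_o6 (hfo j j' hjj) (cm_fE j)
      · -- the sum identity
        rw [hesum, hfsum, Fintype.sum_sum_type, Fintype.sum_sum_type, Fintype.sum_prod_type]
        simp only [hg, Sum.elim_inl, Sum.elim_inr]
        have h1a : ∀ i, ∑ j, (c i + d j) • (e i * f j)
            = c i • (e i * F) + ∑ j, d j • (e i * f j) := by
          intro i
          calc ∑ j, (c i + d j) • (e i * f j)
              = ∑ j, (c i • (e i * f j) + d j • (e i * f j)) :=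
                Finset.sum_congr rfl (fun j _ => add_smul _ _ _)
            _ = (∑ j, c i • (e i * f j)) + ∑ j, d j • (e i * f j) := Finset.sum_add_distrib
            _ = c i • (e i * F) + ∑ j, d j • (e i * f j) := by
                rw [← Finset.smul_sum, ← Finset.mul_sum, ← hF]
        have h2 : ∑ i, ∑ j, d j • (e i * f j) = ∑ j, d j • (E * f j) := by
          rw [Finset.sum_comm]
          refine Finset.sum_congr rfl fun j _ => ?_
          rw [← Finset.smul_sum, ← Finset.sum_mul, ← hE]
        have h1 : ∑ i, ∑ j, (c i + d j) • (e i * f j)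
            = (∑ i, c i • (e i * F)) + ∑ j, d j • (E * f j) := by
          calc ∑ i, ∑ j, (c i + d j) • (e i * f j)
              = ∑ i, (c i • (e i * F) + ∑ j, d j • (e i * f j)) :=
                Finset.sum_congr rfl (fun i _ => h1a i)
            _ = (∑ i, c i • (e i * F)) + ∑ i, ∑ j, d j • (e i * f j) := Finset.sum_add_distrib
            _ = _ := by rw [h2]
        have h4 : ∑ i, c i • (e i - e i * F)
            = (∑ i, c i • e i) - ∑ i, c i • (e i * F) := by
          simp only [smul_sub]; exact Finset.sum_sub_distrib _ _
        have h5 : ∑ j, d j • (f j - E * f j)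
            = (∑ j, d j • f j) - ∑ j, d j • (E * f j) := by
          simp only [smul_sub]; exact Finset.sum_sub_distrib _ _
        rw [h1, h4, h5]
        abel
  -- assemble
  intro b
  obtain ⟨ι, _, e, c, heB, hesa, heid, heo, hsum⟩ := key (b : A) (hspan _ b.2)
  set eB : ι → B := fun i => ⟨e i, heB i⟩ with heB
  set c' : ι → ℂ := fun i => if e i = 0 then 0 else c i with hc'
  have hsum' : (b : A) = ∑ i, c' i • e i := by
    rw [hsum]
    refine Finset.sum_congr rfl fun i _ => ?_
    by_cases h : e i = 0 <;> simp [hc', h]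
  have hbeq : b = ∑ i, c' i • eB i := by
    apply Subtype.ext
    rw [hsum']
    push_cast
    rfl
  let πₗ : B →ₗ[ℂ] (H →L[ℂ] H) :=
    { toFun := π, map_add' := hadd, map_smul' := hsmul }
  have hπb : π b = ∑ i, c' i • π (eB i) := by
    have h0 : π b = πₗ b := rfl
    rw [h0, hbeq, map_sum]
    simp only [map_smul]
    rfl
  have hfsa : ∀ i, star (π (eB i)) = π (eB i) := by
    intro i
    rw [← hstar (eB i)]
    congr 1
    exact Subtype.ext (by simpa using hesa i)
  have hfid : ∀ i, π (eB i) * π (eB i) = π (eB i) := by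
    intro i
    rw [← hmul]
    congr 1
    exact Subtype.ext (by simpa using heid i)
  have hforth : ∀ i j, i ≠ j → π (eB i) * π (eB j) = 0 := by
    intro i j hij
    rw [← hmul]
    have h0 : eB i * eB j = 0 := Subtype.ext (by simpa using heo i j hij)
    rw [h0]
    exact map_zero πₗ
  have hM0 : (0:ℝ) ≤ ‖b‖ := norm_nonneg b
  have hcb : ∀ i, ‖c' i‖ ≤ ‖b‖ := by
    intro i
    by_cases h : e i = 0
    · simp [hc', h, norm_nonneg]
    · have hmulb : (b : A) * e i = c i • e i := by
        rw [hsum, Finset.sum_mul, Finset.sum_eq_single i (fun k _ hk => by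
          rw [smul_mul_assoc, heo k i hk, smul_zero]) (by simp),
          smul_mul_assoc, heid i]
      have h1 : ‖c i • e i‖ ≤ ‖(b:A)‖ * ‖e i‖ := hmulb ▸ norm_mul_le _ _
      rw [norm_smul] at h1
      have h2 : (0:ℝ) < ‖e i‖ := norm_pos_iff.mpr h
      calc ‖c' i‖ = ‖c i‖ := by rw [hc']; simp [h]
        _ ≤ ‖b‖ := by
          have hbn : ‖b‖ = ‖(b:A)‖ := rfl
          rw [hbn]
          exact le_of_mul_le_mul_right h1 h2
  rw [hπb]
  exact aux_norm_le (fun i => π (eB i)) c' hfsa hfid hforth hM0 hcb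
end

section
/- Let X be a subshift over an alphabet A and, for each a ∈ A, let S_a be the bounded operator on ℓ²(X) determined by S_a δ_x = δ_{ax} if x ∈ F_a and S_a δ_x = 0 otherwise; for a word α = α₁⋯α_n ∈ L_X set S_α := S_{α₁}⋯S_{α_n}, with S_ω := 1. Then for all α, β ∈ L_X, one has S_β S_α* S_α S_β* = P_{C(α,β)} as operators on ℓ²(X). -/
namespace SubshiftPaper

variable {A : Type*}

/-- The Hilbert space `ℓ²(X)`. -/
noncomputable abbrev H2 (X : Set (ℕ → A)) := lp (fun _ : ↥X => ℂ) 2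

open Classical in
/-- The canonical orthonormal basis vector `δ_x` of `ℓ²(X)`. -/
noncomputable def delta (X : Set (ℕ → A)) (x : ↥X) : H2 X := lp.single 2 x 1

/-- The defining property of the operator `S_a`: `S_a δ_x = δ_{ax}` for `x ∈ F_a` and
`S_a δ_x = 0` otherwise. -/
def IsShiftOp (X : Set (ℕ → A)) (a : A) (S : H2 X →L[ℂ] H2 X) : Prop :=
  (∀ (x : ↥X) (hx : cat [a] x.1 ∈ X), S (delta X x) = delta X ⟨cat [a] x.1, hx⟩) ∧
  (∀ x : ↥X, cat [a] x.1 ∉ X → S (delta X x) = 0)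

/-- The word operator `S_α = S_{α₁} ⋯ S_{α_n}`, with `S_ω = 1`. -/
noncomputable def Sword (X : Set (ℕ → A)) (S : A → (H2 X →L[ℂ] H2 X)) (α : List A) :
    H2 X →L[ℂ] H2 X :=
  (α.map S).prod


section Aux

lemma cat_nil (x : ℕ → A) : cat [] x = x := by
  funext n; simp [cat]

lemma cat_single_succ (a : A) (x : ℕ → A) (m : ℕ) : cat [a] x (m + 1) = x m := by
  simp only [cat, List.length_cons, List.length_nil]
  norm_num

lemma cat_cons (a : A) (α : List A) (x : ℕ → A) :
    cat (a :: α) x = cat [a] (cat α x) := by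
  funext n
  rcases n with _ | m
  · simp [cat]
  · rw [cat_single_succ]
    simp only [cat, List.length_cons]
    rcases lt_or_ge m α.length with h | h
    · rw [dif_pos (by omega), dif_pos h]
      simp
    · rw [dif_neg (by omega), dif_neg (by omega)]
      congr 1; omega

lemma cat_injective (α : List A) {x x' : ℕ → A} (h : cat α x = cat α x') : x = x' := by
  funext n
  have := congrFun h (α.length + n)
  simpa [cat, Nat.add_sub_cancel_left] using this

lemma mem_of_cat_single_mem {X : Set (ℕ → A)} (hX : IsSubshift X) {a : A} {x : ℕ → A}
    (h : cat [a] x ∈ X) : x ∈ X := by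
  obtain ⟨F, -, rfl⟩ := hX
  intro n k
  have key := h (n + 1) k
  have he : (fun i => x (n + i)) = (fun i => cat [a] x (n + 1 + i)) := by
    funext i
    rw [show n + 1 + i = (n + i) + 1 by omega, cat_single_succ]
  rwa [he]

lemma mem_of_cat_mem {X : Set (ℕ → A)} (hX : IsSubshift X) {α : List A} {x : ℕ → A}
    (h : cat α x ∈ X) : x ∈ X := by
  induction α with
  | nil => rwa [cat_nil] at h
  | cons a α ih =>
    rw [cat_cons] at h
    exact ih (mem_of_cat_single_mem hX h)

open Classical

lemma delta_apply (X : Set (ℕ → A)) (x z : ↥X) :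
    (delta X x : ∀ _ : ↥X, ℂ) z = if z = x then 1 else 0 := by
  rw [delta, lp.single_apply]
  split_ifs with h
  · subst h; simp
  · simp [Pi.single_apply, h]

lemma inner_delta_left (X : Set (ℕ → A)) (x : ↥X) (f : H2 X) :
    @inner ℂ _ _ (delta X x) f = f x := by
  rw [delta, lp.inner_single_left]
  simp [RCLike.inner_apply]

lemma sword_delta (X : Set (ℕ → A)) (hX : IsSubshift X)
    (S : A → (H2 X →L[ℂ] H2 X)) (hS : ∀ a : A, IsShiftOp X a (S a)) (α : List A) (x : ↥X) :
    (∀ h : cat α x.1 ∈ X, Sword X S α (delta X x) = delta X ⟨cat α x.1, h⟩) ∧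
    (cat α x.1 ∉ X → Sword X S α (delta X x) = 0) := by
  induction α with
  | nil =>
    constructor
    · intro h
      simp only [Sword, List.map_nil, List.prod_nil, ContinuousLinearMap.one_apply]
      exact congrArg (delta X) (Subtype.ext (cat_nil x.1).symm)
    · intro h
      exact absurd x.2 (by rwa [cat_nil] at h)
  | cons a α ih =>
    have hmul : Sword X S (a :: α) = S a * Sword X S α := by
      simp [Sword, List.map_cons, List.prod_cons]
    constructor
    · intro h
      have hα : cat α x.1 ∈ X := mem_of_cat_single_mem hX (by rwa [← cat_cons])
      have h' : cat [a] (cat α x.1) ∈ X := by rw [← cat_cons]; exact h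
      rw [hmul, ContinuousLinearMap.mul_apply, ih.1 hα, (hS a).1 ⟨cat α x.1, hα⟩ h']
      exact congrArg (delta X) (Subtype.ext (cat_cons a α x.1).symm)
    · intro h
      by_cases hα : cat α x.1 ∈ X
      · rw [hmul, ContinuousLinearMap.mul_apply, ih.1 hα]
        exact (hS a).2 ⟨cat α x.1, hα⟩ (by rw [← cat_cons]; exact h)
      · rw [hmul, ContinuousLinearMap.mul_apply, ih.2 hα, map_zero]

open ContinuousLinearMap in
lemma adjoint_sword_delta (X : Set (ℕ → A)) (hX : IsSubshift X)
    (S : A → (H2 X →L[ℂ] H2 X)) (hS : ∀ a : A, IsShiftOp X a (S a)) (α : List A) (y : ↥X) :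
    (∀ (x : ↥X), y.1 = cat α x.1 →
        adjoint (Sword X S α) (delta X y) = delta X x) ∧
    ((∀ x : ↥X, y.1 ≠ cat α x.1) → adjoint (Sword X S α) (delta X y) = 0) := by
  have coord : ∀ z : ↥X, (adjoint (Sword X S α) (delta X y) : ∀ _ : ↥X, ℂ) z
      = @inner ℂ _ _ ((Sword X S α) (delta X z)) (delta X y) := by
    intro z
    rw [← inner_delta_left X z, adjoint_inner_right]
  constructor
  · intro x hx
    apply lp.ext
    funext z
    rw [coord z, delta_apply]
    by_cases hz : z = x
    · subst hz
      have hzx : cat α z.1 ∈ X := by rw [← hx]; exact y.2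
      rw [(sword_delta X hX S hS α z).1 hzx, inner_delta_left, delta_apply,
        if_pos (Subtype.ext hx.symm : (⟨cat α z.1, hzx⟩ : ↥X) = y), if_pos rfl]
    · rw [if_neg hz]
      by_cases hm : cat α z.1 ∈ X
      · rw [(sword_delta X hX S hS α z).1 hm, inner_delta_left, delta_apply, if_neg]
        intro hy
        exact hz (Subtype.ext (cat_injective α ((congrArg Subtype.val hy).trans hx)))
      · rw [(sword_delta X hX S hS α z).2 hm, inner_zero_left]
  · intro hall
    apply lp.ext
    funext z
    rw [coord z]
    by_cases hm : cat α z.1 ∈ X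
    · rw [(sword_delta X hX S hS α z).1 hm, inner_delta_left, delta_apply, if_neg]
      · rfl
      · intro hy
        exact hall z ((congrArg Subtype.val hy).symm)
    · rw [(sword_delta X hX S hS α z).2 hm, inner_zero_left]; rfl

end Aux

open ContinuousLinearMap in
/-- `S_β S_α* S_α S_β* = P_{C(α,β)}` for all `α, β` in the language of `X`. -/
theorem stmt10 {A : Type*} (X : Set (ℕ → A)) (hX : IsSubshift X)
    (S : A → (H2 X →L[ℂ] H2 X)) (hS : ∀ a : A, IsShiftOp X a (S a)) :
    ∀ α ∈ language X, ∀ β ∈ language X, ∀ y : ↥X,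
      (y.1 ∈ Cab X α β →
        (Sword X S β * adjoint (Sword X S α) * Sword X S α * adjoint (Sword X S β))
          (delta X y) = delta X y) ∧
      (y.1 ∉ Cab X α β →
        (Sword X S β * adjoint (Sword X S α) * Sword X S α * adjoint (Sword X S β))
          (delta X y) = 0) := by
  intro α _ β _ y
  constructor
  · rintro ⟨x, hyx, hβx, hαx⟩
    have hxX : x ∈ X := mem_of_cat_mem hX hβx
    simp only [ContinuousLinearMap.mul_apply]
    rw [(adjoint_sword_delta X hX S hS β y).1 ⟨x, hxX⟩ hyx,
      (sword_delta X hX S hS α ⟨x, hxX⟩).1 hαx,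
      (adjoint_sword_delta X hX S hS α ⟨cat α x, hαx⟩).1 ⟨x, hxX⟩ rfl,
      (sword_delta X hX S hS β ⟨x, hxX⟩).1 hβx]
    exact congrArg (delta X) (Subtype.ext hyx.symm)
  · intro hy
    by_cases hex : ∃ x : ℕ → A, y.1 = cat β x
    · obtain ⟨x, hyx⟩ := hex
      have hβx : cat β x ∈ X := hyx ▸ y.2
      have hxX : x ∈ X := mem_of_cat_mem hX hβx
      have hαx : cat α x ∉ X := fun h => hy ⟨x, hyx, hβx, h⟩
      simp only [ContinuousLinearMap.mul_apply]
      rw [(adjoint_sword_delta X hX S hS β y).1 ⟨x, hxX⟩ hyx,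
        (sword_delta X hX S hS α ⟨x, hxX⟩).2 hαx, map_zero, map_zero]
    · push_neg at hex
      simp only [ContinuousLinearMap.mul_apply]
      rw [(adjoint_sword_delta X hX S hS β y).2 (fun x => hex x.1), map_zero, map_zero,
        map_zero]

end SubshiftPaper
end

section
/- Let A = {a_n : n ∈ ℕ} ∪ {b_n : n ∈ ℕ} ∪ {c} be an alphabet of pairwise distinct symbols, and let X be the subshift over A with forbidden words {de : d, e ∈ A, e ≠ c} (i.e., X = {x ∈ A^ℕ : x_{n+1} = c for all n ∈ ℕ}). Then: (1) X = {a_n c^∞ : n ∈ ℕ} ∪ {b_n c^∞ : n ∈ ℕ} ∪ {c^∞}; (2) the Boolean algebra U consists exactly of the subsets S ⊆ X such that S is finite or X ∖ S is finite; (3) U_reg = {S ∈ U : S is finite and nonempty}. -/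
namespace SubshiftPaper

variable {A : Type*}

/-- The set of letters `a` with `Z_a ∩ S ≠ ∅`. -/
def letterSet (X : Set (ℕ → A)) (S : Set (ℕ → A)) : Set A :=
  {a | ({x ∈ X | x 0 = a} ∩ S).Nonempty}

/-- The regular sets: `U_reg = {S ∈ U : {a : Z_a ∩ S ≠ ∅} is finite and nonempty}`. -/
def Ureg (X : Set (ℕ → A)) : Set (Set (ℕ → A)) :=
  {S ∈ BA X | (letterSet X S).Finite ∧ (letterSet X S).Nonempty}

/-- The sequence `d c^∞ = d,c,c,c,…`. -/
def dc {A : Type*} (c d : A) : ℕ → A := fun n => if n = 0 then d else c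

/-- for the subshift `X = {x : x_{n+1} = c ∀ n}` over the alphabet
`{a_n} ∪ {b_n} ∪ {c}`, one has (1) `X = {a_n c^∞} ∪ {b_n c^∞} ∪ {c^∞}`; (2) `U` consists
exactly of the finite and the cofinite subsets of `X`; (3) `U_reg` consists of the finite
nonempty elements of `U`. -/
theorem stmt15 {A : Type*} (a b : ℕ → A) (c : A)
    (ha : Function.Injective a) (hb : Function.Injective b)
    (hab : ∀ m n : ℕ, a m ≠ b n) (hac : ∀ n, a n ≠ c) (hbc : ∀ n, b n ≠ c)
    (hcover : ∀ d : A, (∃ n, d = a n) ∨ (∃ n, d = b n) ∨ d = c)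
    (X : Set (ℕ → A)) (hXdef : X = {x : ℕ → A | ∀ n : ℕ, x (n + 1) = c}) :
    X = ({y | ∃ n, y = dc c (a n)} ∪ {y | ∃ n, y = dc c (b n)} ∪ {fun _ => c}) ∧
    BA X = {S | S ⊆ X ∧ (S.Finite ∨ (X \ S).Finite)} ∧
    Ureg X = {S | S ∈ BA X ∧ S.Finite ∧ S.Nonempty} := by
  -- basic facts
  have memX : ∀ x : ℕ → A, x ∈ X ↔ ∀ n : ℕ, x (n + 1) = c := by
    intro x; rw [hXdef]; rfl
  have cat_nil : ∀ x : ℕ → A, cat ([] : List A) x = x := by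
    intro x; funext n; simp [cat]
  have hdcX : ∀ d : A, dc c d ∈ X := by
    intro d; rw [memX]; intro n; simp [dc]
  have hconstX : (fun _ : ℕ => c) ∈ X := by rw [memX]; intro n; rfl
  have hdcc : dc c c = (fun _ : ℕ => c) := by funext n; simp [dc]
  have hXeq : ∀ x ∈ X, x = dc c (x 0) := by
    intro x hx; funext n
    cases n with
    | zero => rfl
    | succ m => rw [(memX x).mp hx m]; simp [dc]
  have hforce : ∀ (γ : List A) (x : ℕ → A), γ ≠ [] → cat γ x ∈ X → x = fun _ => c := by
    intro γ x hγ hgx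
    funext k
    have hlen : 1 ≤ γ.length := List.length_pos_iff.mpr hγ
    have h1 := (memX _).mp hgx (γ.length - 1 + k)
    have h2 : γ.length - 1 + k + 1 = γ.length + k := by omega
    rw [h2] at h1
    have h3 : ¬ (γ.length + k < γ.length) := by omega
    simp only [cat, h3, dif_neg] at h1
    simpa using h1
  have cat_single : ∀ d : A, cat [d] (fun _ => c) = dc c d := by
    intro d; funext n
    cases n with
    | zero => simp [cat, dc]
    | succ m => simp [cat, dc]
  -- language facts
  have hnil_lang : ([] : List A) ∈ language X :=
    ⟨fun _ => c, hconstX, by simp [word]⟩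
  have hsingle_lang : ∀ d : A, [d] ∈ language X := by
    intro d
    refine ⟨dc c d, hdcX d, ?_⟩
    simp [word, List.ofFn_succ, dc]
  -- Cab singleton computation
  have hCab_single : ∀ d : A, Cab X [] [d] = {dc c d} := by
    intro d
    ext y
    constructor
    · rintro ⟨x, rfl, h1, h2⟩
      have hx : x = fun _ => c := hforce [d] x (by simp) h1
      rw [hx, cat_single]
      rfl
    · rintro rfl
      exact ⟨fun _ => c, (cat_single d).symm, by rw [cat_single]; exact hdcX d,
        by rw [cat_nil]; exact hconstX⟩
  -- BA membership characterization
  have memBA_iff : ∀ S : Set (ℕ → A), S ∈ BA X ↔ ∀ C : Set (Set (ℕ → A)),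
      (X ∈ C ∧ (∀ α ∈ language X, ∀ β ∈ language X, Cab X α β ∈ C) ∧
        (∀ S ∈ C, ∀ T ∈ C, S ∪ T ∈ C) ∧ (∀ S ∈ C, ∀ T ∈ C, S ∩ T ∈ C) ∧
        (∀ S ∈ C, X \ S ∈ C)) → S ∈ C := by
    intro S
    unfold BA
    exact Set.mem_sInter
  have hsingBA : ∀ x ∈ X, {x} ∈ BA X := by
    intro x hx
    rw [memBA_iff]
    rintro C ⟨hXC, hCab, -, -, -⟩
    have : Cab X [] [x 0] ∈ C := hCab [] hnil_lang [x 0] (hsingle_lang (x 0))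
    rwa [hCab_single, ← hXeq x hx] at this
  have hemptyBA : (∅ : Set (ℕ → A)) ∈ BA X := by
    rw [memBA_iff]
    rintro C ⟨hXC, -, -, -, hco⟩
    have := hco X hXC
    rwa [Set.diff_self] at this
  have hunionBA : ∀ S ∈ BA X, ∀ T ∈ BA X, S ∪ T ∈ BA X := by
    intro S hS T hT
    rw [memBA_iff] at *
    intro C hC
    exact hC.2.2.1 S (hS C hC) T (hT C hC)
  have hcomplBA : ∀ S ∈ BA X, X \ S ∈ BA X := by
    intro S hS
    rw [memBA_iff] at *
    intro C hC
    exact hC.2.2.2.2 S (hS C hC)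
  have hfinBA : ∀ S : Set (ℕ → A), S.Finite → S ⊆ X → S ∈ BA X := by
    intro S hfin
    refine Set.Finite.induction_on (motive := fun s _ => s ⊆ X → s ∈ BA X) S hfin (fun _ => hemptyBA) ?_
    intro x s hxs hsfin ih hins
    have hx : x ∈ X := hins (Set.mem_insert _ _)
    have hs : s ⊆ X := fun y hy => hins (Set.mem_insert_of_mem _ hy)
    rw [Set.insert_eq]
    exact hunionBA _ (hsingBA x hx) _ (ih hs)
  -- part 2
  have part2 : BA X = {S | S ⊆ X ∧ (S.Finite ∨ (X \ S).Finite)} := by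
    apply Set.Subset.antisymm
    · -- BA X ⊆ fin/cofin
      intro S hS
      rw [memBA_iff] at hS
      apply hS
      refine ⟨⟨Set.Subset.refl X, Or.inr (by rw [Set.diff_self]; exact Set.finite_empty)⟩,
        ?_, ?_, ?_, ?_⟩
      · -- Cab sets
        intro α hα β hβ
        by_cases hαβ : α = [] ∧ β = []
        · obtain ⟨rfl, rfl⟩ := hαβ
          have : Cab X ([] : List A) [] = X := by
            ext y
            constructor
            · rintro ⟨x, rfl, h1, -⟩; exact h1
            · intro hy; exact ⟨y, (cat_nil y).symm, by rwa [cat_nil], by rwa [cat_nil]⟩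
          rw [this]
          exact ⟨Set.Subset.refl X, Or.inr (by rw [Set.diff_self]; exact Set.finite_empty)⟩
        · constructor
          · rintro y ⟨x, rfl, h1, -⟩; exact h1
          · left
            apply Set.Finite.subset (Set.finite_singleton (cat β (fun _ => c)))
            rintro y ⟨x, rfl, h1, h2⟩
            have hx : x = fun _ => c := by
              by_cases hβ0 : β = []
              · have hα0 : α ≠ [] := fun h => hαβ ⟨h, hβ0⟩
                exact hforce α x hα0 h2
              · exact hforce β x hβ0 h1
            rw [hx]
            rfl
      · -- union
        rintro S ⟨hS1, hS2⟩ T ⟨hT1, hT2⟩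
        refine ⟨Set.union_subset hS1 hT1, ?_⟩
        rcases hS2 with hS2 | hS2
        · rcases hT2 with hT2 | hT2
          · exact Or.inl (hS2.union hT2)
          · exact Or.inr (hT2.subset (fun y hy => ⟨hy.1, fun h => hy.2 (Or.inr h)⟩))
        · exact Or.inr (hS2.subset (fun y hy => ⟨hy.1, fun h => hy.2 (Or.inl h)⟩))
      · -- intersection
        rintro S ⟨hS1, hS2⟩ T ⟨hT1, hT2⟩
        refine ⟨fun y hy => hS1 hy.1, ?_⟩
        rcases hS2 with hS2 | hS2
        · exact Or.inl (hS2.subset (fun y hy => hy.1))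
        · rcases hT2 with hT2 | hT2
          · exact Or.inl (hT2.subset (fun y hy => hy.2))
          · refine Or.inr ((hS2.union hT2).subset ?_)
            intro y hy
            by_cases h : y ∈ S
            · exact Or.inr ⟨hy.1, fun hT => hy.2 ⟨h, hT⟩⟩
            · exact Or.inl ⟨hy.1, h⟩
      · -- complement
        rintro S ⟨hS1, hS2⟩
        refine ⟨Set.diff_subset, ?_⟩
        rcases hS2 with hS2 | hS2
        · exact Or.inr (by rwa [Set.diff_diff_cancel_left hS1])
        · exact Or.inl hS2
    · -- fin/cofin ⊆ BA X
      rintro S ⟨hS1, hS2 | hS2⟩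
      · exact hfinBA S hS2 hS1
      · have : S = X \ (X \ S) := (Set.diff_diff_cancel_left hS1).symm
        rw [this]
        exact hcomplBA _ (hfinBA _ hS2 Set.diff_subset)
  -- part 1
  have part1 : X = ({y | ∃ n, y = dc c (a n)} ∪ {y | ∃ n, y = dc c (b n)} ∪ {fun _ => c}) := by
    ext x
    constructor
    · intro hx
      have hxe := hXeq x hx
      rcases hcover (x 0) with ⟨n, hn⟩ | ⟨n, hn⟩ | hn
      · exact Or.inl (Or.inl ⟨n, by rw [hxe, hn]⟩)
      · exact Or.inl (Or.inr ⟨n, by rw [hxe, hn]⟩)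
      · exact Or.inr (by rw [Set.mem_singleton_iff, hxe, hn, hdcc])
    · rintro ((⟨n, rfl⟩ | ⟨n, rfl⟩) | h)
      · exact hdcX _
      · exact hdcX _
      · rw [Set.mem_singleton_iff] at h; rw [h]; exact hconstX
  -- part 3
  have hsubX : ∀ S ∈ BA X, S ⊆ X := by
    intro S hS
    rw [part2] at hS
    exact hS.1
  have hletter : ∀ S : Set (ℕ → A), S ⊆ X → letterSet X S = (fun x => x 0) '' S := by
    intro S hS
    ext d
    constructor
    · rintro ⟨x, ⟨⟨hxX, hx0⟩, hxS⟩⟩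
      exact ⟨x, hxS, hx0⟩
    · rintro ⟨x, hxS, hx0⟩
      exact ⟨x, ⟨⟨hS hxS, hx0⟩, hxS⟩⟩
  have hinj : Set.InjOn (fun x : ℕ → A => x 0) X := by
    intro x hx y hy h
    have h' : x 0 = y 0 := h
    rw [hXeq x hx, hXeq y hy, h']
  have part3 : Ureg X = {S | S ∈ BA X ∧ S.Finite ∧ S.Nonempty} := by
    ext S
    simp only [Ureg, Set.mem_setOf_eq, Set.mem_sep_iff]
    constructor
    · rintro ⟨hS, hfin, hne⟩
      have hS' := hsubX S hS
      rw [hletter S hS'] at hfin hne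
      refine ⟨hS, Set.Finite.of_finite_image hfin (hinj.mono hS'), ?_⟩
      obtain ⟨d, x, hxS, -⟩ := hne
      exact ⟨x, hxS⟩
    · rintro ⟨hS, hfin, hne⟩
      have hS' := hsubX S hS
      rw [hletter S hS']
      exact ⟨hS, hfin.image _, hne.image _⟩
  exact ⟨part1, part2, part3⟩

end SubshiftPaper
end

section
/- Let A = {a_n : n ∈ ℕ} ∪ {b_n : n ∈ ℕ} ∪ {c} be an alphabet of pairwise distinct symbols and let X = {a_n c^∞ : n ∈ ℕ} ∪ {b_n c^∞ : n ∈ ℕ} ∪ {c^∞} be the subshift with forbidden words {de : d, e ∈ A, e ≠ c}. Let V be the ℤ-module of finitely supported functions X → ℤ, let W be the ℤ-module of functions X → ℤ that are constant outside a finite subset of X, and define the ℤ-linear map T : V → W by T(f)(y) = f(y) − ∑_{x ∈ X, σ(x) = y} f(x) (the sum has finitely many nonzero terms since f is finitely supported). Then the kernel of T is the free ℤ-module ℤ·χ_{{c^∞}}, hence isomorphic to ℤ, and the cokernel W / T(V) is isomorphic to ℤ². -/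
namespace SubshiftPaper

variable {A : Type*}

/-- The ℤ-module `V` of finitely supported functions `X → ℤ`. -/
def Vmod (X : Set (ℕ → A)) : Submodule ℤ (↥X → ℤ) where
  carrier := {f | (Function.support f).Finite}
  zero_mem' := by simp [Function.support_zero]
  add_mem' := by
    intro f g hf hg
    exact (Set.Finite.union hf hg).subset (Function.support_add f g)
  smul_mem' := by
    intro m f hf
    apply hf.subset
    intro x hx
    simp only [Function.mem_support] at hx ⊢
    intro hfx
    exact hx (by simp [Pi.smul_apply, hfx])

/-- The ℤ-module `W` of functions `X → ℤ` that are constant outside a finite set. -/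
def Wmod (X : Set (ℕ → A)) : Submodule ℤ (↥X → ℤ) where
  carrier := {f | ∃ m : ℤ, {x | f x ≠ m}.Finite}
  zero_mem' := ⟨0, by simp⟩
  add_mem' := by
    rintro f g ⟨m, hm⟩ ⟨k, hk⟩
    refine ⟨m + k, (Set.Finite.union hm hk).subset ?_⟩
    intro x hx
    simp only [Set.mem_setOf_eq, Set.mem_union] at hx ⊢
    by_contra hcon
    push_neg at hcon
    exact hx (by simp [Pi.add_apply, hcon.1, hcon.2])
  smul_mem' := by
    rintro m f ⟨k, hk⟩
    refine ⟨m * k, hk.subset ?_⟩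
    intro x hx
    simp only [Set.mem_setOf_eq] at hx ⊢
    intro hfx
    exact hx (by simp [Pi.smul_apply, hfx, smul_eq_mul])

open Classical in
/-- for the subshift `X = {a_n c^∞} ∪ {b_n c^∞} ∪ {c^∞}` and the map
`T : V → W`, `T(f)(y) = f(y) − ∑_{σ(x) = y} f(x)`, the kernel of `T` is `ℤ·χ_{{c^∞}} ≅ ℤ`
and the cokernel `W / T(V)` is isomorphic to `ℤ²`. -/
theorem stmt16 {A : Type*} (a b : ℕ → A) (c : A)
    (ha : Function.Injective a) (hb : Function.Injective b)
    (hab : ∀ m n : ℕ, a m ≠ b n) (hac : ∀ n, a n ≠ c) (hbc : ∀ n, b n ≠ c)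
    (hcover : ∀ d : A, (∃ n, d = a n) ∨ (∃ n, d = b n) ∨ d = c)
    (X : Set (ℕ → A)) (hXdef : X = {x : ℕ → A | ∀ n : ℕ, x (n + 1) = c})
    (T : Vmod X →ₗ[ℤ] Wmod X)
    (hT : ∀ (f : Vmod X) (y : ↥X),
      (T f : ↥X → ℤ) y =
        (f : ↥X → ℤ) y - ∑ᶠ x ∈ {x : ↥X | shiftSeq x.1 = y.1}, (f : ↥X → ℤ) x) :
    (∀ f : Vmod X, T f = 0 ↔
      ∃ m : ℤ, ∀ x : ↥X, (f : ↥X → ℤ) x = if x.1 = (fun _ => c) then m else 0) ∧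
    Nonempty (LinearMap.ker T ≃ₗ[ℤ] ℤ) ∧
    Nonempty ((↥(Wmod X) ⧸ LinearMap.range T) ≃ₗ[ℤ] (ℤ × ℤ)) := by
  classical
  -- Basic facts about `X`
  have hXc : ∀ x : ↥X, ∀ n, x.1 (n + 1) = c := by
    intro x n
    exact (hXdef.subset x.2) n
  have cmem : (fun _ : ℕ => c) ∈ X := by rw [hXdef]; intro n; rfl
  set cpt : ↥X := ⟨fun _ => c, cmem⟩ with hcpt
  have hext : ∀ x : ↥X, x.1 0 = c → x = cpt := by
    intro x h
    apply Subtype.ext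
    funext n
    cases n with
    | zero => exact h
    | succ n => exact hXc x n
  have heqc : ∀ x : ↥X, (x.1 = fun _ => c) ↔ x = cpt := by
    intro x
    constructor
    · intro h; exact Subtype.ext h
    · intro h; rw [h]
  have hshift : ∀ x : ↥X, shiftSeq x.1 = fun _ => c := by
    intro x; funext n; exact hXc x n
  have hset : ∀ y : ↥X,
      {x : ↥X | shiftSeq x.1 = y.1} = if y = cpt then Set.univ else (∅ : Set ↥X) := by
    intro y
    by_cases hy : y = cpt
    · rw [if_pos hy]
      ext x
      simp only [Set.mem_setOf_eq, Set.mem_univ, iff_true, hshift x, hy]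
      rfl
    · rw [if_neg hy]
      ext x
      simp only [Set.mem_setOf_eq, Set.mem_empty_iff_false, iff_false, hshift x]
      intro h
      exact hy (hext y (congrFun h.symm 0))
  have hT' : ∀ (f : Vmod X) (y : ↥X),
      (T f : ↥X → ℤ) y =
        (f : ↥X → ℤ) y - (if y = cpt then ∑ᶠ x : ↥X, (f : ↥X → ℤ) x else 0) := by
    intro f y
    rw [hT f y]
    congr 1
    by_cases hy : y = cpt
    · rw [hset y, if_pos hy, if_pos hy, finsum_mem_univ]
    · rw [hset y, if_neg hy, if_neg hy, finsum_mem_empty]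
  -- `X` is infinite
  have hamem : ∀ n, dc c (a n) ∈ X := by
    intro n; rw [hXdef]; intro k; simp [dc]
  haveI : Infinite ↥X := Infinite.of_injective (fun n => (⟨dc c (a n), hamem n⟩ : ↥X))
    (by
      intro m n h
      have h0 : dc c (a m) 0 = dc c (a n) 0 := congrFun (congrArg Subtype.val h) 0
      simp only [dc, if_pos rfl] at h0
      exact ha h0)
  -- The kernel characterization
  have hker : ∀ f : Vmod X, T f = 0 ↔
      ∃ m : ℤ, ∀ x : ↥X, (f : ↥X → ℤ) x = if x.1 = (fun _ => c) then m else 0 := by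
    intro f
    constructor
    · intro h0
      refine ⟨(f : ↥X → ℤ) cpt, fun x => ?_⟩
      by_cases hx : x = cpt
      · rw [hx, if_pos rfl]
      · have h1 := hT' f x
        rw [h0] at h1
        rw [if_neg hx, sub_zero] at h1
        have hz : (f : ↥X → ℤ) x = 0 := by simpa using h1.symm
        rw [hz, if_neg (fun hc => hx ((heqc x).mp hc))]
    · rintro ⟨m, hm⟩
      have hm' : ∀ x : ↥X, (f : ↥X → ℤ) x = if x = cpt then m else 0 := by
        intro x
        rw [hm x]
        by_cases hx : x = cpt
        · rw [if_pos hx, if_pos ((heqc x).mpr hx)]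
        · rw [if_neg hx, if_neg (fun h => hx ((heqc x).mp h))]
      have hz : ∀ x : ↥X, x ≠ cpt → (f : ↥X → ℤ) x = 0 := by
        intro x hx; rw [hm' x, if_neg hx]
      have hsum : ∑ᶠ x : ↥X, (f : ↥X → ℤ) x = m := by
        rw [finsum_eq_single _ cpt hz, hm' cpt, if_pos rfl]
      apply Subtype.ext
      funext y
      have hy : (T f : ↥X → ℤ) y = 0 := by
        rw [hT' f y]
        by_cases hy : y = cpt
        · rw [if_pos hy, hsum, hm' y, if_pos hy, sub_self]
        · rw [if_neg hy, hm' y, if_neg hy, sub_zero]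
      simpa using hy
  -- kernel ≃ ℤ
  have hker2 : Nonempty (LinearMap.ker T ≃ₗ[ℤ] ℤ) := by
    refine ⟨LinearEquiv.ofBijective
      { toFun := fun f : LinearMap.ker T => ((f.1 : Vmod X) : ↥X → ℤ) cpt
        map_add' := fun f g => rfl
        map_smul' := fun r f => rfl } ⟨?_, ?_⟩⟩
    · intro f g h
      obtain ⟨m1, hm1⟩ := (hker f.1).mp (LinearMap.mem_ker.mp f.2)
      obtain ⟨m2, hm2⟩ := (hker g.1).mp (LinearMap.mem_ker.mp g.2)
      have e1 : m1 = ((f.1 : Vmod X) : ↥X → ℤ) cpt := by rw [hm1 cpt, if_pos rfl]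
      have e2 : m2 = ((g.1 : Vmod X) : ↥X → ℤ) cpt := by rw [hm2 cpt, if_pos rfl]
      apply Subtype.ext; apply Subtype.ext; funext x
      rw [hm1 x, hm2 x, e1, e2]
      exact if_congr Iff.rfl h rfl
    · intro m
      have hmemV : (fun x : ↥X => if x = cpt then m else 0) ∈ Vmod X := by
        show (Function.support fun x : ↥X => if x = cpt then m else 0).Finite
        apply Set.Finite.subset (Set.finite_singleton cpt)
        intro x hx
        rw [Set.mem_singleton_iff]
        by_contra hne
        exact hx (if_neg hne)
      have hink : (⟨_, hmemV⟩ : Vmod X) ∈ LinearMap.ker T := by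
        rw [LinearMap.mem_ker, hker]
        refine ⟨m, fun x => ?_⟩
        show (if x = cpt then m else 0) = if (x.1 = fun _ => c) then m else 0
        by_cases hx : x = cpt
        · rw [if_pos hx, if_pos ((heqc x).mpr hx)]
        · rw [if_neg hx, if_neg (fun h => hx ((heqc x).mp h))]
      exact ⟨⟨⟨_, hmemV⟩, hink⟩, if_pos rfl⟩
  -- facts about `W`
  have hW : ∀ g : Wmod X, ∃ m : ℤ, {x : ↥X | (g : ↥X → ℤ) x ≠ m}.Finite := fun g => g.2
  have hmuniq : ∀ (g : ↥X → ℤ) (m m' : ℤ),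
      {x : ↥X | g x ≠ m}.Finite → {x : ↥X | g x ≠ m'}.Finite → m = m' := by
    intro g m m' h1 h2
    by_contra hne
    have hsub : (Set.univ : Set ↥X) ⊆ {x | g x ≠ m} ∪ {x | g x ≠ m'} := by
      intro x _
      by_contra hx
      simp only [Set.mem_union, Set.mem_setOf_eq, not_or, not_not] at hx
      exact hne (hx.1 ▸ hx.2 ▸ rfl)
    exact Set.infinite_univ ((h1.union h2).subset hsub)
  set mfun : Wmod X → ℤ := fun g => Classical.choose (hW g) with hmfundef
  have hmfun : ∀ g : Wmod X, {x : ↥X | (g : ↥X → ℤ) x ≠ mfun g}.Finite :=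
    fun g => Classical.choose_spec (hW g)
  have hmchar : ∀ (g : Wmod X) (m : ℤ), {x : ↥X | (g : ↥X → ℤ) x ≠ m}.Finite → mfun g = m :=
    fun g m h => hmuniq _ _ _ (hmfun g) h
  have hsuppfin : ∀ g : Wmod X,
      (Function.support fun x => (g : ↥X → ℤ) x - mfun g).Finite := by
    intro g
    apply (hmfun g).subset
    intro x hx
    simp only [Function.mem_support] at hx
    simp only [Set.mem_setOf_eq]
    intro h; exact hx (by rw [h, sub_self])
  -- the map φ : W → ℤ × ℤ
  set φ : Wmod X →ₗ[ℤ] ℤ × ℤ :=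
    { toFun := fun g => (mfun g, ∑ᶠ x : ↥X, ((g : ↥X → ℤ) x - mfun g))
      map_add' := by
        intro g h
        have hm : mfun (g + h) = mfun g + mfun h := by
          apply hmchar
          apply ((hmfun g).union (hmfun h)).subset
          intro x hx
          simp only [Set.mem_setOf_eq, Set.mem_union] at hx ⊢
          by_contra hc
          push_neg at hc
          exact hx (by simp [hc.1, hc.2])
        have h2 : ∑ᶠ x : ↥X, (((g + h : Wmod X) : ↥X → ℤ) x - mfun (g + h)) =
            ∑ᶠ x : ↥X, (((g : ↥X → ℤ) x - mfun g) + ((h : ↥X → ℤ) x - mfun h)) :=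
          finsum_congr (fun x => by
            rw [hm]
            simp only [Submodule.coe_add, Pi.add_apply]
            ring)
        refine Prod.ext ?_ ?_
        · simpa using hm
        · simp only [Prod.snd_add]
          rw [h2, finsum_add_distrib (hsuppfin g) (hsuppfin h)]
      map_smul' := by
        intro r g
        have hm : mfun (r • g) = r * mfun g := by
          apply hmchar
          apply (hmfun g).subset
          intro x hx
          simp only [Set.mem_setOf_eq] at hx ⊢
          intro h
          exact hx (by simp [h])
        have h2 : ∑ᶠ x : ↥X, (((r • g : Wmod X) : ↥X → ℤ) x - mfun (r • g)) =
            ∑ᶠ x : ↥X, r * ((g : ↥X → ℤ) x - mfun g) :=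
          finsum_congr (fun x => by
            rw [hm]
            simp only [Submodule.coe_smul, Pi.smul_apply, smul_eq_mul]
            ring)
        refine Prod.ext ?_ ?_
        · simpa using hm
        · simp only [RingHom.id_apply, Prod.smul_snd, smul_eq_mul]
          rw [h2, ← mul_finsum _ r] } with hφdef
  have hφapp : ∀ g : Wmod X, φ g = (mfun g, ∑ᶠ x : ↥X, ((g : ↥X → ℤ) x - mfun g)) :=
    fun g => rfl
  -- φ is surjective
  have hsurj : Function.Surjective φ := by
    rintro ⟨m, k⟩
    have hfin : {x : ↥X | (fun x : ↥X => m + if x = cpt then k else 0) x ≠ m}.Finite := by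
      apply Set.Finite.subset (Set.finite_singleton cpt)
      intro x hx
      simp only [Set.mem_setOf_eq] at hx
      rw [Set.mem_singleton_iff]
      by_contra hne
      exact hx (by rw [if_neg hne, add_zero])
    have hmemW : (fun x : ↥X => m + if x = cpt then k else 0) ∈ Wmod X := ⟨m, hfin⟩
    refine ⟨⟨_, hmemW⟩, ?_⟩
    have hm : mfun ⟨_, hmemW⟩ = m := hmchar _ _ hfin
    rw [hφapp, hm]
    have hs : ∑ᶠ x : ↥X, (((⟨_, hmemW⟩ : Wmod X) : ↥X → ℤ) x - m) = k := by
      have he : ∀ x : ↥X, ((⟨_, hmemW⟩ : Wmod X) : ↥X → ℤ) x - m =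
          (if x = cpt then k else 0) := by
        intro x
        show (m + if x = cpt then k else 0) - m = _
        ring
      rw [finsum_congr he, finsum_eq_single _ cpt (fun x hx => if_neg hx), if_pos rfl]
    rw [hs]
  -- range T = ker φ
  have hrange : LinearMap.range T = LinearMap.ker φ := by
    apply le_antisymm
    · rintro g ⟨f, rfl⟩
      rw [LinearMap.mem_ker]
      have hfs : (Function.support (f : ↥X → ℤ)).Finite := f.2
      have hfinT : {y : ↥X | (T f : ↥X → ℤ) y ≠ 0}.Finite := by
        apply Set.Finite.subset (hfs.union (Set.finite_singleton cpt))
        intro y hy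
        simp only [Set.mem_setOf_eq] at hy
        by_contra hcon
        simp only [Set.mem_union, Function.mem_support, Set.mem_singleton_iff, not_or,
          not_not] at hcon
        exact hy (by rw [hT' f y, hcon.1, if_neg hcon.2, sub_zero])
      have hm0 : mfun (T f) = 0 := hmchar _ _ hfinT
      have hite : (Function.support
          (fun y : ↥X => if y = cpt then ∑ᶠ x : ↥X, (f : ↥X → ℤ) x else 0)).Finite := by
        apply Set.Finite.subset (Set.finite_singleton cpt)
        intro y hy
        rw [Set.mem_singleton_iff]
        by_contra hne
        exact hy (if_neg hne)
      have hsum1 : ∑ᶠ y : ↥X, (if y = cpt then ∑ᶠ x : ↥X, (f : ↥X → ℤ) x else 0) =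
          ∑ᶠ x : ↥X, (f : ↥X → ℤ) x := by
        rw [finsum_eq_single _ cpt (fun x hx => if_neg hx), if_pos rfl]
      have hsum0 : ∑ᶠ y : ↥X, ((T f : ↥X → ℤ) y - mfun (T f)) = 0 := by
        rw [hm0]
        have he : ∑ᶠ y : ↥X, ((T f : ↥X → ℤ) y - 0) =
            ∑ᶠ y : ↥X, ((f : ↥X → ℤ) y -
              (if y = cpt then ∑ᶠ x : ↥X, (f : ↥X → ℤ) x else 0)) :=
          finsum_congr (fun y => by rw [sub_zero, hT' f y])
        rw [he, finsum_sub_distrib hfs hite, hsum1, sub_self]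
      rw [hφapp, hsum0, hm0]
      rfl
    · intro g hg
      rw [LinearMap.mem_ker] at hg
      have h1 : mfun g = 0 := congrArg Prod.fst hg
      have h2 : ∑ᶠ x : ↥X, ((g : ↥X → ℤ) x - mfun g) = 0 := congrArg Prod.snd hg
      have hfin : (Function.support (g : ↥X → ℤ)).Finite := by
        have hh := hmfun g
        rw [h1] at hh
        exact hh
      refine ⟨⟨(g : ↥X → ℤ), hfin⟩, ?_⟩
      have hs : ∑ᶠ x : ↥X, ((⟨(g : ↥X → ℤ), hfin⟩ : Vmod X) : ↥X → ℤ) x = 0 := by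
        rw [h1] at h2
        simp only [sub_zero] at h2
        exact h2
      apply Subtype.ext
      funext y
      have : (T ⟨(g : ↥X → ℤ), hfin⟩ : ↥X → ℤ) y = (g : ↥X → ℤ) y := by
        rw [hT' _ y, hs]
        simp
      simpa using this
  exact ⟨hker, hker2,
    ⟨(Submodule.quotEquivOfEq _ _ hrange).trans (φ.quotKerEquivOfSurjective hsurj)⟩⟩

end SubshiftPaper
end
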